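/- arXiv:1907.07869 — 17 statements merged into one kernel-verified Lean document; each statement's English description precedes it below -/
import Mathlib

section
/- If y satisfies a ≤ y ≤ b for real numbers a ≤ b, then y^4 ≤ (3/4·(a+b)^2 − ab)·y^2 + ((a+b)^3/4 − (a+b)·ab)·y − (a+b)^2/4·ab. -/
theorem stmt_0 (a b y : ℝ) (h1 : a ≤ y) (h2 : y ≤ b) :
    y ^ 4 ≤ (3 / 4 * (a + b) ^ 2 - a * b) * y ^ 2
      + ((a + b) ^ 3 / 4 - (a + b) * (a * b)) * y - (a + b) ^ 2 / 4 * (a * b) := by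
  nlinarith [mul_nonneg (sub_nonneg.2 h1) (sub_nonneg.2 h2), sq_nonneg (y - (a + b) / 2),
    sq_nonneg (y + (a + b) / 2), mul_nonneg (mul_nonneg (sub_nonneg.2 h1) (sub_nonneg.2 h2)) (sq_nonneg (y + (a + b) / 2))]
end

section
/- Let X be a finite discrete random variable taking values x_1,...,x_n in [m,M] with probabilities p_1,...,p_n (p_i ≥ 0, ∑p_i = 1). Let μ₁' = ∑ p_i x_i, μ₂ = ∑ p_i (x_i−μ₁')², μ₄ = ∑ p_i (x_i−μ₁')⁴. Then μ₄ ≤ α·μ₂ + β where α = (3/4)(M−m)² − 2(μ₁'−m)(M−μ₁') and β = (μ₁'−m)(M−μ₁')·((1/4)(M−m)² − (μ₁'−m)(M−μ₁')). -/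
theorem stmt_1 (n : ℕ) (hn : 1 ≤ n) (m M : ℝ) (x p : Fin n → ℝ)
    (hx : ∀ i, x i ∈ Set.Icc m M) (hp : ∀ i, 0 ≤ p i) (hps : ∑ i, p i = 1)
    (μ1 μ2 μ4 α β : ℝ)
    (hμ1 : μ1 = ∑ i, p i * x i)
    (hμ2 : μ2 = ∑ i, p i * (x i - μ1) ^ 2)
    (hμ4 : μ4 = ∑ i, p i * (x i - μ1) ^ 4)
    (hα : α = 3 / 4 * (M - m) ^ 2 - 2 * (μ1 - m) * (M - μ1))
    (hβ : β = (μ1 - m) * (M - μ1) * (1 / 4 * (M - m) ^ 2 - (μ1 - m) * (M - μ1))) :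
    μ4 ≤ α * μ2 + β := by
  set γ : ℝ := (M + m - 2 * μ1) * (M - m) ^ 2 / 4 with hγ
  have key : ∀ i, p i * (x i - μ1) ^ 4
      ≤ p i * (α * (x i - μ1) ^ 2 + γ * (x i - μ1) + β) := by
    intro i
    refine mul_le_mul_of_nonneg_left ?_ (hp i)
    have h1 := (hx i).1
    have h2 := (hx i).2
    have hid : α * (x i - μ1) ^ 2 + γ * (x i - μ1) + β - (x i - μ1) ^ 4
        = (x i - m) * (M - x i) * (x i - 2 * μ1 + (M + m) / 2) ^ 2 := by
      rw [hα, hβ, hγ]; ring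
    nlinarith [mul_nonneg (mul_nonneg (sub_nonneg.2 h1) (sub_nonneg.2 h2))
      (sq_nonneg (x i - 2 * μ1 + (M + m) / 2))]
  have h0 : ∑ i, p i * (x i - μ1) = 0 := by
    simp only [mul_sub]
    rw [Finset.sum_sub_distrib, ← Finset.sum_mul, hps, ← hμ1]; ring
  calc μ4 = ∑ i, p i * (x i - μ1) ^ 4 := hμ4
    _ ≤ ∑ i, p i * (α * (x i - μ1) ^ 2 + γ * (x i - μ1) + β) :=
        Finset.sum_le_sum fun i _ => key i
    _ = α * (∑ i, p i * (x i - μ1) ^ 2) + γ * (∑ i, p i * (x i - μ1))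
        + β * (∑ i, p i) := by
        rw [Finset.mul_sum, Finset.mul_sum, Finset.mul_sum,
          ← Finset.sum_add_distrib, ← Finset.sum_add_distrib]
        exact Finset.sum_congr rfl fun i _ => by ring
    _ = α * μ2 + β := by rw [← hμ2, h0, hps]; ring
end

section
/- With μ₁', μ₂, μ₄ the mean, second and fourth central moments of a finite discrete distribution supported in [m,M], one has μ₄ + 3μ₂² ≤ (M−m)²(μ₁'−m)(M−μ₁'). -/
theorem stmt_2 (n : ℕ) (m M : ℝ) (x p : Fin n → ℝ)
    (hx : ∀ i, x i ∈ Set.Icc m M) (hp : ∀ i, 0 ≤ p i) (hps : ∑ i, p i = 1)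
    (μ1 μ2 μ4 : ℝ)
    (hμ1 : μ1 = ∑ i, p i * x i)
    (hμ2 : μ2 = ∑ i, p i * (x i - μ1) ^ 2)
    (hμ4 : μ4 = ∑ i, p i * (x i - μ1) ^ 4) :
    μ4 + 3 * μ2 ^ 2 ≤ (M - m) ^ 2 * (μ1 - m) * (M - μ1) := by
  set a := μ1 - m with ha
  set b := M - μ1 with hb
  -- mean centered sum is zero
  have hy0 : ∑ i, p i * (x i - μ1) = 0 := by
    have : ∑ i, p i * (x i - μ1) = (∑ i, p i * x i) - μ1 * (∑ i, p i) := by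
      rw [Finset.mul_sum, ← Finset.sum_sub_distrib]
      exact Finset.sum_congr rfl (fun i _ => by ring)
    rw [this, hps, ← hμ1]; ring
  have hma : 0 ≤ a := by
    have : m = ∑ i, p i * m := by rw [← Finset.sum_mul, hps, one_mul]
    have h := Finset.sum_le_sum (fun i (_ : i ∈ Finset.univ) =>
      mul_le_mul_of_nonneg_left (hx i).1 (hp i))
    simp only [ha]; rw [hμ1, this]; linarith [h]
  have hMb : 0 ≤ b := by
    have : M = ∑ i, p i * M := by rw [← Finset.sum_mul, hps, one_mul]
    have h := Finset.sum_le_sum (fun i (_ : i ∈ Finset.univ) =>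
      mul_le_mul_of_nonneg_left (hx i).2 (hp i))
    simp only [hb]; rw [hμ1, this]; linarith [h]
  -- pointwise: (x i - μ1)^2 ≤ a*b + (b-a)*(x i - μ1)
  have hpt : ∀ i, (x i - μ1) ^ 2 ≤ a * b + (b - a) * (x i - μ1) := by
    intro i
    have h1 := (hx i).1
    have h2 := (hx i).2
    nlinarith [mul_nonneg (by linarith : (0:ℝ) ≤ x i - m) (by linarith : (0:ℝ) ≤ M - x i)]
  have hμ2nn : 0 ≤ μ2 := by
    rw [hμ2]
    exact Finset.sum_nonneg fun i _ => mul_nonneg (hp i) (sq_nonneg _)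
  have h2le : μ2 ≤ a * b := by
    rw [hμ2]
    calc ∑ i, p i * (x i - μ1) ^ 2
        ≤ ∑ i, p i * (a * b + (b - a) * (x i - μ1)) :=
          Finset.sum_le_sum fun i _ => mul_le_mul_of_nonneg_left (hpt i) (hp i)
      _ = a * b * (∑ i, p i) + (b - a) * (∑ i, p i * (x i - μ1)) := by
          rw [Finset.mul_sum, Finset.mul_sum, ← Finset.sum_add_distrib]
          exact Finset.sum_congr rfl (fun i _ => by ring)
      _ = a * b := by rw [hps, hy0]; ring
  have h4le : μ4 ≤ (a * b) ^ 2 + (b - a) ^ 2 * μ2 := by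
    rw [hμ4, hμ2]
    calc ∑ i, p i * (x i - μ1) ^ 4
        ≤ ∑ i, p i * (a * b + (b - a) * (x i - μ1)) ^ 2 := by
          refine Finset.sum_le_sum fun i _ => mul_le_mul_of_nonneg_left ?_ (hp i)
          have h := hpt i
          nlinarith [sq_nonneg (x i - μ1)]
      _ = (a * b) ^ 2 * (∑ i, p i) + 2 * (a * b) * (b - a) * (∑ i, p i * (x i - μ1))
            + (b - a) ^ 2 * (∑ i, p i * (x i - μ1) ^ 2) := by
          rw [Finset.mul_sum, Finset.mul_sum, Finset.mul_sum, ← Finset.sum_add_distrib,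
            ← Finset.sum_add_distrib]
          exact Finset.sum_congr rfl (fun i _ => by ring)
      _ = (a * b) ^ 2 + (b - a) ^ 2 * (∑ i, p i * (x i - μ1) ^ 2) := by
          rw [hps, hy0]; ring
  have key : (M - m) ^ 2 * (μ1 - m) * (M - μ1) = (a + b) ^ 2 * a * b := by
    simp only [ha, hb]; ring
  rw [key]
  nlinarith [mul_nonneg (mul_nonneg hma hMb) (sq_nonneg (b - a)),
    mul_nonneg hμ2nn (sq_nonneg (b - a)), mul_nonneg hma hMb, sq_nonneg (a*b - μ2)]
end

section
/- With μ₂, μ₄ the second and fourth central moments of a finite discrete distribution supported in [m,M], one has μ₄ + 3μ₂² ≤ (M−m)⁴/4. -/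
theorem stmt_3 (n : ℕ) (m M : ℝ) (x p : Fin n → ℝ)
    (hx : ∀ i, x i ∈ Set.Icc m M) (hp : ∀ i, 0 ≤ p i) (hps : ∑ i, p i = 1)
    (μ1 μ2 μ4 : ℝ)
    (hμ1 : μ1 = ∑ i, p i * x i)
    (hμ2 : μ2 = ∑ i, p i * (x i - μ1) ^ 2)
    (hμ4 : μ4 = ∑ i, p i * (x i - μ1) ^ 4) :
    μ4 + 3 * μ2 ^ 2 ≤ (M - m) ^ 4 / 4 := by
  set a : ℝ := m - μ1 with ha_def
  set b : ℝ := M - μ1 with hb_def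
  clear_value a b
  -- μ1 is between m and M
  have hμ1m : m ≤ μ1 := by
    rw [hμ1]
    calc m = ∑ i, p i * m := by rw [← Finset.sum_mul, hps, one_mul]
    _ ≤ ∑ i, p i * x i :=
      Finset.sum_le_sum fun i _ => mul_le_mul_of_nonneg_left (hx i).1 (hp i)
  have hμ1M : μ1 ≤ M := by
    rw [hμ1]
    calc ∑ i, p i * x i ≤ ∑ i, p i * M :=
        Finset.sum_le_sum fun i _ => mul_le_mul_of_nonneg_left (hx i).2 (hp i)
    _ = M := by rw [← Finset.sum_mul, hps, one_mul]
  have ha : a ≤ 0 := by rw [ha_def]; linarith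
  have hb : 0 ≤ b := by rw [hb_def]; linarith
  -- centered first moment is zero
  have hz0 : ∑ i, p i * (x i - μ1) = 0 := by
    have : ∑ i, p i * (x i - μ1) = (∑ i, p i * x i) - (∑ i, p i) * μ1 := by
      rw [Finset.sum_mul, ← Finset.sum_sub_distrib]
      congr 1; ext i; ring
    rw [this, hps, ← hμ1]; ring
  -- μ2 ≥ 0
  have h2nn : 0 ≤ μ2 := by
    rw [hμ2]
    exact Finset.sum_nonneg fun i _ => mul_nonneg (hp i) (sq_nonneg _)
  -- μ2 ≤ -ab
  have h2 : μ2 ≤ -(a * b) := by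
    rw [hμ2]
    calc ∑ i, p i * (x i - μ1) ^ 2
        ≤ ∑ i, p i * ((a + b) * (x i - μ1) - a * b) := by
          refine Finset.sum_le_sum fun i _ => mul_le_mul_of_nonneg_left ?_ (hp i)
          have h1 := (hx i).1
          have h2 := (hx i).2
          nlinarith [mul_nonneg (by linarith : (0:ℝ) ≤ x i - μ1 - a)
            (by linarith : (0:ℝ) ≤ b - (x i - μ1))]
    _ = (a + b) * (∑ i, p i * (x i - μ1)) - a * b * (∑ i, p i) := by
          rw [Finset.mul_sum, Finset.mul_sum, ← Finset.sum_sub_distrib]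
          congr 1; ext i; ring
    _ = -(a * b) := by rw [hz0, hps]; ring
  -- μ4 ≤ -ab(a²+ab+b²)
  have h4 : μ4 ≤ -(a * b) * (a ^ 2 + a * b + b ^ 2) := by
    rw [hμ4]
    calc ∑ i, p i * (x i - μ1) ^ 4
        ≤ ∑ i, p i * ((a + b) * (a ^ 2 + b ^ 2) * (x i - μ1)
            - a * b * (a ^ 2 + a * b + b ^ 2)) := by
          refine Finset.sum_le_sum fun i _ => mul_le_mul_of_nonneg_left ?_ (hp i)
          have h1 := (hx i).1
          have h2 := (hx i).2
          set z := x i - μ1 with hz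
          have hfac : (0:ℝ) ≤ (z - a) * (b - z) := by
            apply mul_nonneg <;> rw [hz] <;> [rw [ha_def]; rw [hb_def]] <;> linarith
          have hQ : (0:ℝ) ≤ z ^ 2 + (a + b) * z + (a ^ 2 + a * b + b ^ 2) := by
            nlinarith [sq_nonneg (2 * z + a + b), sq_nonneg (a + b), sq_nonneg (a - b)]
          nlinarith [mul_nonneg hfac hQ]
    _ = (a + b) * (a ^ 2 + b ^ 2) * (∑ i, p i * (x i - μ1))
          - a * b * (a ^ 2 + a * b + b ^ 2) * (∑ i, p i) := by
          rw [Finset.mul_sum, Finset.mul_sum, ← Finset.sum_sub_distrib]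
          congr 1; ext i; ring
    _ = -(a * b) * (a ^ 2 + a * b + b ^ 2) := by rw [hz0, hps]; ring
  -- final algebra
  have hab : 0 ≤ -(a * b) := by nlinarith
  have hMm : M - m = b - a := by rw [ha_def, hb_def]; ring
  rw [hMm]
  have h2sq : μ2 ^ 2 ≤ (a * b) ^ 2 := by nlinarith
  have key : -(a * b) * (a ^ 2 + a * b + b ^ 2) + 3 * (a * b) ^ 2 ≤ (b - a) ^ 4 / 4 := by
    nlinarith [sq_nonneg (a ^ 2 - b ^ 2)]
  linarith
end

section
/- With μ₂, μ₄ the second and fourth central moments of a finite discrete distribution supported in [m,M], one has μ₂² ≤ (μ₄ + 3μ₂²)/4 ≤ (M−m)⁴/16. -/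
theorem stmt_4 (n : ℕ) (m M : ℝ) (x p : Fin n → ℝ)
    (hx : ∀ i, x i ∈ Set.Icc m M) (hp : ∀ i, 0 ≤ p i) (hps : ∑ i, p i = 1)
    (μ1 μ2 μ4 : ℝ)
    (hμ1 : μ1 = ∑ i, p i * x i)
    (hμ2 : μ2 = ∑ i, p i * (x i - μ1) ^ 2)
    (hμ4 : μ4 = ∑ i, p i * (x i - μ1) ^ 4) :
    μ2 ^ 2 ≤ (μ4 + 3 * μ2 ^ 2) / 4 ∧ (μ4 + 3 * μ2 ^ 2) / 4 ≤ (M - m) ^ 4 / 16 := by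
  have hn : 0 < n := by
    rcases n with _ | n
    · simp at hps
    · exact Nat.succ_pos n
  have hm : m ≤ M := le_trans (hx ⟨0, hn⟩).1 (hx ⟨0, hn⟩).2
  have hd : (0:ℝ) ≤ M - m := by linarith
  -- S1 = 0
  have hS1 : ∑ i, p i * (x i - μ1) = 0 := by
    have : ∑ i, p i * (x i - μ1) = (∑ i, p i * x i) - μ1 * ∑ i, p i := by
      rw [Finset.mul_sum, ← Finset.sum_sub_distrib]
      exact Finset.sum_congr rfl fun i _ => by ring
    rw [this, hps, ← hμ1]; ring
  -- μ2 ≥ 0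
  have hμ2nn : 0 ≤ μ2 := by
    rw [hμ2]
    exact Finset.sum_nonneg fun i _ => mul_nonneg (hp i) (sq_nonneg _)
  -- μ4 ≥ μ2 ^ 2
  have h42 : μ2 ^ 2 ≤ μ4 := by
    have key : ∑ i, p i * ((x i - μ1) ^ 2 - μ2) ^ 2
        = (∑ i, p i * (x i - μ1) ^ 4) - 2 * μ2 * (∑ i, p i * (x i - μ1) ^ 2)
          + μ2 ^ 2 * ∑ i, p i := by
      simp only [Finset.mul_sum, ← Finset.sum_sub_distrib, ← Finset.sum_add_distrib]
      exact Finset.sum_congr rfl fun i _ => by ring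
    rw [← hμ4, ← hμ2] at key
    have pos : 0 ≤ ∑ i, p i * ((x i - μ1) ^ 2 - μ2) ^ 2 :=
      Finset.sum_nonneg fun i _ => mul_nonneg (hp i) (sq_nonneg _)
    rw [key, hps] at pos
    nlinarith
  -- Popoviciu: μ2 ≤ (M - m)^2 / 4
  have hpop : μ2 ≤ (M - m) ^ 2 / 4 := by
    have key : ∑ i, p i * (x i - (m + M) / 2) ^ 2
        = μ2 + 2 * (μ1 - (m + M) / 2) * ∑ i, p i * (x i - μ1)
          + (μ1 - (m + M) / 2) ^ 2 * ∑ i, p i := by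
      rw [hμ2, Finset.mul_sum, Finset.mul_sum]
      rw [← Finset.sum_add_distrib, ← Finset.sum_add_distrib]
      exact Finset.sum_congr rfl fun i _ => by ring
    rw [hS1, hps] at key
    have hub : ∑ i, p i * (x i - (m + M) / 2) ^ 2 ≤ ∑ i, p i * ((M - m) / 2) ^ 2 := by
      refine Finset.sum_le_sum fun i _ => ?_
      refine mul_le_mul_of_nonneg_left ?_ (hp i)
      have h1 := (hx i).1
      have h2 := (hx i).2
      nlinarith
    rw [← Finset.sum_mul, hps, one_mul] at hub
    nlinarith [sq_nonneg (μ1 - (m + M) / 2)]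
  -- double sum identities
  have inner4 : ∀ i, ∑ j, p i * p j * (x i - x j) ^ 4
      = p i * (x i - μ1) ^ 4 * (∑ j, p j)
        - 4 * (p i * (x i - μ1) ^ 3) * (∑ j, p j * (x j - μ1))
        + 6 * (p i * (x i - μ1) ^ 2) * (∑ j, p j * (x j - μ1) ^ 2)
        - 4 * (p i * (x i - μ1)) * (∑ j, p j * (x j - μ1) ^ 3)
        + p i * (∑ j, p j * (x j - μ1) ^ 4) := by
    intro i
    simp only [Finset.mul_sum, ← Finset.sum_sub_distrib, ← Finset.sum_add_distrib]
    exact Finset.sum_congr rfl fun j _ => by ring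
  have hD4 : ∑ i, ∑ j, p i * p j * (x i - x j) ^ 4 = 2 * μ4 + 6 * μ2 ^ 2 := by
    have : ∑ i, ∑ j, p i * p j * (x i - x j) ^ 4
        = (∑ i, p i * (x i - μ1) ^ 4) * 1
          - 4 * (∑ i, p i * (x i - μ1) ^ 3) * (0:ℝ)
          + 6 * (∑ i, p i * (x i - μ1) ^ 2) * (∑ j, p j * (x j - μ1) ^ 2)
          - 4 * (0:ℝ) * (∑ i, p i * (x i - μ1) ^ 3)
          + 1 * (∑ j, p j * (x j - μ1) ^ 4) := by
      rw [Finset.sum_congr rfl fun i _ => inner4 i]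
      simp only [hps, hS1, Finset.sum_sub_distrib, Finset.sum_add_distrib,
        ← Finset.sum_mul, ← Finset.mul_sum]
    rw [this, ← hμ2, ← hμ4]; ring
  have inner2 : ∀ i, ∑ j, p i * p j * (x i - x j) ^ 2
      = p i * (x i - μ1) ^ 2 * (∑ j, p j)
        - 2 * (p i * (x i - μ1)) * (∑ j, p j * (x j - μ1))
        + p i * (∑ j, p j * (x j - μ1) ^ 2) := by
    intro i
    simp only [Finset.mul_sum, ← Finset.sum_sub_distrib, ← Finset.sum_add_distrib]
    exact Finset.sum_congr rfl fun j _ => by ring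
  have hD2 : ∑ i, ∑ j, p i * p j * (x i - x j) ^ 2 = 2 * μ2 := by
    have : ∑ i, ∑ j, p i * p j * (x i - x j) ^ 2
        = (∑ i, p i * (x i - μ1) ^ 2) * 1
          - 2 * (0:ℝ) * (0:ℝ)
          + 1 * (∑ j, p j * (x j - μ1) ^ 2) := by
      rw [Finset.sum_congr rfl fun i _ => inner2 i]
      simp only [hps, hS1, Finset.sum_sub_distrib, Finset.sum_add_distrib,
        ← Finset.sum_mul, ← Finset.mul_sum]
    rw [this, ← hμ2]; ring
  -- termwise bound
  have hbd : ∑ i, ∑ j, p i * p j * (x i - x j) ^ 4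
      ≤ ∑ i, ∑ j, p i * p j * ((M - m) ^ 2 * (x i - x j) ^ 2) := by
    refine Finset.sum_le_sum fun i _ => Finset.sum_le_sum fun j _ => ?_
    refine mul_le_mul_of_nonneg_left ?_ (mul_nonneg (hp i) (hp j))
    have h1 := (hx i).1
    have h2 := (hx i).2
    have h3 := (hx j).1
    have h4 := (hx j).2
    have hsq : (x i - x j) ^ 2 ≤ (M - m) ^ 2 := by nlinarith
    nlinarith [sq_nonneg (x i - x j)]
  have hfac : ∑ i, ∑ j, p i * p j * ((M - m) ^ 2 * (x i - x j) ^ 2)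
      = (M - m) ^ 2 * ∑ i, ∑ j, p i * p j * (x i - x j) ^ 2 := by
    simp only [Finset.mul_sum]
    exact Finset.sum_congr rfl fun i _ => Finset.sum_congr rfl fun j _ => by ring
  have hmain : 2 * μ4 + 6 * μ2 ^ 2 ≤ (M - m) ^ 2 * (2 * μ2) := by
    rw [← hD4, ← hD2]
    calc ∑ i, ∑ j, p i * p j * (x i - x j) ^ 4
        ≤ ∑ i, ∑ j, p i * p j * ((M - m) ^ 2 * (x i - x j) ^ 2) := hbd
      _ = (M - m) ^ 2 * ∑ i, ∑ j, p i * p j * (x i - x j) ^ 2 := hfac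
  have hfin : (M - m) ^ 2 * (2 * μ2) ≤ (M - m) ^ 2 * (2 * ((M - m) ^ 2 / 4)) := by
    refine mul_le_mul_of_nonneg_left (by linarith) (sq_nonneg _)
  constructor
  · nlinarith
  · nlinarith
end

section
/- Let x_1,...,x_n be real numbers in [m,M] with n odd, mean x̄ = (1/n)∑x_i, m₂ = (1/n)∑(x_i−x̄)², m₄ = (1/n)∑(x_i−x̄)⁴. Then m₄ + 3m₂² ≤ ((n²−1)/(4n²))·(M−m)⁴. -/
set_option maxHeartbeats 800000


lemma keyA (n : ℕ) (hodd : Odd n) (k : ℕ) :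
    ∀ y : Fin n → ℝ, (∀ i, y i ∈ Set.Icc (0:ℝ) 1) →
      (Finset.univ.filter fun i => y i ≠ 0 ∧ y i ≠ 1).card ≤ k →
      (n:ℝ) * (∑ i, (y i)^2) - (∑ i, y i)^2 ≤ ((n:ℝ)^2 - 1)/4 := by
  induction k with
  | zero =>
    intro y hy hcard
    have hy01 : ∀ i, y i = 0 ∨ y i = 1 := by
      intro i
      by_contra h
      push_neg at h
      have hi : i ∈ Finset.univ.filter fun i => y i ≠ 0 ∧ y i ≠ 1 := by
        simp [h.1, h.2]
      have : 0 < (Finset.univ.filter fun i => y i ≠ 0 ∧ y i ≠ 1).card :=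
        Finset.card_pos.2 ⟨i, hi⟩
      omega
    have hsq : ∑ i, (y i)^2 = ∑ i, y i := by
      apply Finset.sum_congr rfl
      intro i _
      rcases hy01 i with h | h <;> simp [h]
    set s : ℕ := (Finset.univ.filter fun i => y i = 1).card with hs
    have hS : ∑ i, y i = (s:ℝ) := by
      rw [← Finset.sum_filter_add_sum_filter_not Finset.univ (fun i => y i = 1)]
      have h1 : ∑ i ∈ Finset.univ.filter (fun i => y i = 1), y i = (s:ℝ) := by
        rw [Finset.sum_congr rfl (fun j hj => (Finset.mem_filter.1 hj).2)]
        simp [hs]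
      have h2 : ∑ i ∈ Finset.univ.filter (fun i => ¬ y i = 1), y i = 0 := by
        apply Finset.sum_eq_zero
        intro j hj
        rcases hy01 j with h | h
        · exact h
        · exact absurd h (Finset.mem_filter.1 hj).2
      rw [h1, h2, add_zero]
    rw [hsq, hS]
    obtain ⟨r, hr⟩ := hodd
    have hne : (n:ℤ) - 2*s ≠ 0 := by omega
    have h1 : (1:ℤ) ≤ ((n:ℤ) - 2*s)^2 := by
      have := Int.one_le_abs hne
      nlinarith [sq_abs ((n:ℤ) - 2*s)]
    have h1R : (1:ℝ) ≤ ((n:ℝ) - 2*s)^2 := by exact_mod_cast h1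
    nlinarith [h1R]
  | succ k ih =>
    intro y hy hcard
    by_cases hc : (Finset.univ.filter fun i => y i ≠ 0 ∧ y i ≠ 1).card ≤ k
    · exact ih y hy hc
    · push_neg at hc
      obtain ⟨i, hi⟩ : ∃ i, i ∈ Finset.univ.filter fun i => y i ≠ 0 ∧ y i ≠ 1 :=
        Finset.card_pos.1 (by omega)
      have hN1 : (1:ℝ) ≤ (n:ℝ) := by exact_mod_cast hodd.pos
      have ht := hy i
      rw [Set.mem_Icc] at ht
      have card_bound : ∀ v : ℝ, (v = 0 ∨ v = 1) →
          (Finset.univ.filter fun j => Function.update y i v j ≠ 0 ∧ Function.update y i v j ≠ 1).card ≤ k := by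
        intro v hv
        have hsub : (Finset.univ.filter fun j => Function.update y i v j ≠ 0 ∧ Function.update y i v j ≠ 1)
            ⊆ (Finset.univ.filter fun j => y j ≠ 0 ∧ y j ≠ 1).erase i := by
          intro j hj
          rw [Finset.mem_filter] at hj
          by_cases hji : j = i
          · subst hji
            rw [Function.update_self] at hj
            rcases hv with h | h
            · exact absurd h hj.2.1
            · exact absurd h hj.2.2
          · rw [Finset.mem_erase]
            refine ⟨hji, ?_⟩
            rw [Finset.mem_filter]
            rw [Function.update_of_ne hji] at hj
            exact ⟨Finset.mem_univ j, hj.2⟩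
        calc _ ≤ ((Finset.univ.filter fun j => y j ≠ 0 ∧ y j ≠ 1).erase i).card :=
              Finset.card_le_card hsub
          _ = (Finset.univ.filter fun j => y j ≠ 0 ∧ y j ≠ 1).card - 1 :=
              Finset.card_erase_of_mem hi
          _ ≤ k := by omega
      have hmem : ∀ v : ℝ, (v = 0 ∨ v = 1) → ∀ j, Function.update y i v j ∈ Set.Icc (0:ℝ) 1 := by
        intro v hv j
        by_cases hji : j = i
        · subst hji
          rw [Function.update_self]
          rcases hv with h | h <;> simp [h]
        · rw [Function.update_of_ne hji]; exact hy j
      have hsum : ∀ v : ℝ, ∑ j, Function.update y i v j = v + ∑ j ∈ Finset.univ.erase i, y j :=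
        fun v => by rw [Finset.erase_eq]; exact Finset.sum_update_of_mem (Finset.mem_univ i) _ _
      have hsumsq : ∀ v : ℝ, ∑ j, (Function.update y i v j)^2
          = v^2 + ∑ j ∈ Finset.univ.erase i, (y j)^2 := by
        intro v
        have he : (fun j => (Function.update y i v j)^2)
            = Function.update (fun j => (y j)^2) i (v^2) := by
          funext j
          by_cases hji : j = i
          · subst hji; simp
          · rw [Function.update_of_ne hji, Function.update_of_ne hji]
        rw [he, Finset.erase_eq]
        exact Finset.sum_update_of_mem (Finset.mem_univ i) _ _
      have h0 := ih _ (hmem 0 (Or.inl rfl)) (card_bound 0 (Or.inl rfl))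
      have h1 := ih _ (hmem 1 (Or.inr rfl)) (card_bound 1 (Or.inr rfl))
      rw [hsum, hsumsq] at h0 h1
      have hy_split : ∑ j, y j = y i + ∑ j ∈ Finset.univ.erase i, y j :=
        (Finset.add_sum_erase _ _ (Finset.mem_univ i)).symm
      have hysq_split : ∑ j, (y j)^2 = (y i)^2 + ∑ j ∈ Finset.univ.erase i, (y j)^2 :=
        (Finset.add_sum_erase _ _ (Finset.mem_univ i)).symm
      rw [hy_split, hysq_split]
      set t := y i
      set R := ∑ j ∈ Finset.univ.erase i, y j
      set Q := ∑ j ∈ Finset.univ.erase i, (y j)^2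
      nlinarith [mul_nonneg (sub_nonneg.2 ht.2) (sub_nonneg.2 h0),
        mul_nonneg ht.1 (sub_nonneg.2 h1),
        mul_nonneg (mul_nonneg (sub_nonneg.2 hN1) ht.1) (sub_nonneg.2 ht.2)]

lemma keyB (n : ℕ) (hodd : Odd n) (a b : ℝ) (y : Fin n → ℝ)
    (hy : ∀ i, y i ∈ Set.Icc a b) :
    (n:ℝ) * (∑ i, (y i)^2) - (∑ i, y i)^2 ≤ ((n:ℝ)^2 - 1)/4 * (b - a)^2 := by
  have hn : 0 < n := hodd.pos
  have i0 : Fin n := ⟨0, hn⟩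
  have hab : a ≤ b := le_trans (hy i0).1 (hy i0).2
  rcases eq_or_lt_of_le hab with heq | hlt
  · have hya : ∀ i, y i = a := by
      intro i
      have := hy i
      rw [Set.mem_Icc, ← heq] at this
      linarith [this.1, this.2]
    simp only [hya]
    rw [Finset.sum_const, Finset.sum_const, Finset.card_univ, Fintype.card_fin,
      nsmul_eq_mul, nsmul_eq_mul, ← heq]
    ring_nf
    nlinarith [sq_nonneg ((n:ℝ)*a)]
  · set c := b - a with hc
    have hcpos : 0 < c := by simp [hc]; linarith
    set z : Fin n → ℝ := fun i => (y i - a) / c with hz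
    have hz01 : ∀ i, z i ∈ Set.Icc (0:ℝ) 1 := by
      intro i
      have := hy i
      rw [Set.mem_Icc] at this ⊢
      constructor
      · apply div_nonneg (by linarith [this.1]) hcpos.le
      · rw [div_le_one hcpos]; linarith [this.2]
    have hyz : ∀ i, y i = a + c * z i := by
      intro i
      have hc0 : c ≠ 0 := hcpos.ne'
      simp only [hz]
      field_simp
      ring
    have hA := keyA n hodd _ z hz01 le_rfl
    have h1 : ∑ i, y i = (n:ℝ)*a + c*(∑ i, z i) := by
      simp only [hyz]
      rw [Finset.sum_add_distrib, Finset.sum_const, Finset.card_univ, Fintype.card_fin,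
        nsmul_eq_mul, ← Finset.mul_sum]
    have h2 : ∑ i, (y i)^2 = (n:ℝ)*a^2 + (2*a*c)*(∑ i, z i) + c^2*(∑ i, (z i)^2) := by
      have e : ∀ i, (y i)^2 = a^2 + (2*a*c)*(z i) + c^2*((z i)^2) := by
        intro i; rw [hyz i]; ring
      simp only [e]
      rw [Finset.sum_add_distrib, Finset.sum_add_distrib, Finset.sum_const,
        Finset.card_univ, Fintype.card_fin, nsmul_eq_mul, ← Finset.mul_sum, ← Finset.mul_sum]
    rw [h1, h2]
    nlinarith [mul_le_mul_of_nonneg_left hA (sq_nonneg c)]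

theorem stmt_5 (n : ℕ) (hn : 0 < n) (hodd : Odd n) (m M : ℝ) (x : Fin n → ℝ)
    (hx : ∀ i, x i ∈ Set.Icc m M)
    (xbar m2 m4 : ℝ)
    (hxbar : xbar = (1 / n) * ∑ i, x i)
    (hm2 : m2 = (1 / n) * ∑ i, (x i - xbar) ^ 2)
    (hm4 : m4 = (1 / n) * ∑ i, (x i - xbar) ^ 4) :
    m4 + 3 * m2 ^ 2 ≤ ((n ^ 2 - 1 : ℝ) / (4 * n ^ 2)) * (M - m) ^ 4 := by
  have hN : (0:ℝ) < n := by exact_mod_cast hn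
  have hN0 : (n:ℝ) ≠ 0 := hN.ne'
  set d : Fin n → ℝ := fun i => x i - xbar with hd
  set S : ℝ := ∑ i, d i with hSdef
  set Q2 : ℝ := ∑ i, (d i)^2 with hQ2def
  set Q3 : ℝ := ∑ i, (d i)^3 with hQ3def
  set Q4 : ℝ := ∑ i, (d i)^4 with hQ4def
  -- sum of deviations is zero
  have hS : S = 0 := by
    rw [hSdef]
    simp only [hd]
    rw [Finset.sum_sub_distrib, Finset.sum_const, Finset.card_univ, Fintype.card_fin,
      nsmul_eq_mul, hxbar]
    field_simp
    ring
  -- moments in terms of sums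
  have hm2' : Q2 = (n:ℝ) * m2 := by rw [hm2, hQ2def]; field_simp
  have hm4' : Q4 = (n:ℝ) * m4 := by rw [hm4, hQ4def]; field_simp
  -- double sum expansions
  have inner2 : ∀ i, ∑ j, (d i - d j)^2 = (n:ℝ)*((d i)^2) - (2*(d i))*S + Q2 := by
    intro i
    have e : ∀ j, (d i - d j)^2 = (d i)^2 - (2*(d i))*(d j) + (d j)^2 := fun j => by ring
    simp only [e]
    rw [Finset.sum_add_distrib, Finset.sum_sub_distrib, Finset.sum_const, ← Finset.mul_sum,
      Finset.card_univ, Fintype.card_fin, nsmul_eq_mul, hSdef, hQ2def]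
  have e2 : ∑ i, ∑ j, (d i - d j)^2 = (n:ℝ)*Q2 - 2*S*S + (n:ℝ)*Q2 := by
    rw [Finset.sum_congr rfl fun i _ => inner2 i]
    have e : ∀ i, (n:ℝ)*((d i)^2) - (2*(d i))*S + Q2 = (n:ℝ)*((d i)^2) - (2*S)*(d i) + Q2 :=
      fun i => by ring
    simp only [e]
    simp only [Finset.sum_add_distrib, Finset.sum_sub_distrib, Finset.sum_const,
      Finset.card_univ, Fintype.card_fin, nsmul_eq_mul, ← Finset.mul_sum,
      ← hSdef, ← hQ2def]
    all_goals ring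
  have inner4 : ∀ i, ∑ j, (d i - d j)^4
      = (n:ℝ)*((d i)^4) - (4*S)*((d i)^3) + (6*Q2)*((d i)^2) - (4*Q3)*(d i) + Q4 := by
    intro i
    have e : ∀ j, (d i - d j)^4
        = (d i)^4 - (4*(d i)^3)*(d j) + (6*(d i)^2)*((d j)^2) - (4*(d i))*((d j)^3) + (d j)^4 :=
      fun j => by ring
    simp only [e]
    rw [Finset.sum_add_distrib, Finset.sum_sub_distrib, Finset.sum_add_distrib,
      Finset.sum_sub_distrib, Finset.sum_const, ← Finset.mul_sum, ← Finset.mul_sum,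
      ← Finset.mul_sum, Finset.card_univ, Fintype.card_fin, nsmul_eq_mul,
      ← hSdef, ← hQ2def, ← hQ3def, ← hQ4def]
    ring
  have e4 : ∑ i, ∑ j, (d i - d j)^4
      = (n:ℝ)*Q4 - (4*S)*Q3 + (6*Q2)*Q2 - (4*Q3)*S + (n:ℝ)*Q4 := by
    rw [Finset.sum_congr rfl fun i _ => inner4 i]
    simp only [Finset.sum_add_distrib, Finset.sum_sub_distrib, Finset.sum_const,
      Finset.card_univ, Fintype.card_fin, nsmul_eq_mul, ← Finset.mul_sum,
      ← hSdef, ← hQ2def, ← hQ3def, ← hQ4def]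
    all_goals ring
  -- pointwise bound
  have hterm : ∀ i j : Fin n, 0 ≤ (M - m)^2*((d i - d j)^2) - (d i - d j)^4 := by
    intro i j
    have h1 := hx i
    have h2 := hx j
    rw [Set.mem_Icc] at h1 h2
    have hde : d i - d j = x i - x j := by simp only [hd]; ring
    have hb : (d i - d j)^2 ≤ (M - m)^2 := by
      rw [hde]; nlinarith [h1.1, h1.2, h2.1, h2.2]
    nlinarith [sq_nonneg (d i - d j)]
  have hsum : 0 ≤ ∑ i, ∑ j, ((M - m)^2*((d i - d j)^2) - (d i - d j)^4) :=
    Finset.sum_nonneg fun i _ => Finset.sum_nonneg fun j _ => hterm i j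
  have split : ∑ i, ∑ j, ((M - m)^2*((d i - d j)^2) - (d i - d j)^4)
      = (M - m)^2 * (∑ i, ∑ j, (d i - d j)^2) - ∑ i, ∑ j, (d i - d j)^4 := by
    rw [Finset.mul_sum, ← Finset.sum_sub_distrib]
    apply Finset.sum_congr rfl
    intro i _
    rw [Finset.mul_sum, ← Finset.sum_sub_distrib]
  rw [split, e2, e4, hS] at hsum
  -- hsum : 0 ≤ (M-m)^2*(n*Q2 - 0 + n*Q2) - (n*Q4 - 0 + 6 Q2 Q2 - 0 + n*Q4)
  -- step 1 : m4 + 3 m2^2 ≤ (M-m)^2 * m2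
  have hN2 : (0:ℝ) < (n:ℝ)^2 := by positivity
  have step1 : m4 + 3*m2^2 ≤ (M - m)^2 * m2 := by
    have key : (n:ℝ)^2 * (m4 + 3*m2^2) ≤ (n:ℝ)^2 * ((M - m)^2 * m2) := by
      rw [hm2', hm4'] at hsum
      nlinarith [hsum]
    exact le_of_mul_le_mul_left key hN2
  -- step 2 : m2 ≤ ((n^2-1)/(4n^2)) (M-m)^2
  have hB := keyB n hodd (m - xbar) (M - xbar) d
    (fun i => by
      have := hx i
      rw [Set.mem_Icc] at this ⊢
      constructor <;> simp [hd] <;> linarith [this.1, this.2])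
  have hMm : (M - xbar) - (m - xbar) = M - m := by ring
  rw [hMm, ← hQ2def, ← hSdef, hS] at hB
  have step2 : m2 ≤ (((n:ℝ)^2 - 1)/(4*(n:ℝ)^2)) * (M - m)^2 := by
    have key : (n:ℝ)^2 * m2 ≤ (n:ℝ)^2 * ((((n:ℝ)^2 - 1)/(4*(n:ℝ)^2)) * (M - m)^2) := by
      have e : (n:ℝ)^2 * ((((n:ℝ)^2 - 1)/(4*(n:ℝ)^2)) * (M - m)^2)
          = ((n:ℝ)^2 - 1)/4 * (M - m)^2 := by field_simp
      rw [e]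
      rw [hm2'] at hB
      nlinarith [hB]
    exact le_of_mul_le_mul_left key hN2
  have hm2nn : 0 ≤ m2 := by
    rw [hm2]
    apply mul_nonneg (by positivity)
    exact Finset.sum_nonneg fun i _ => sq_nonneg _
  calc m4 + 3*m2^2 ≤ (M - m)^2 * m2 := step1
    _ ≤ (M - m)^2 * ((((n:ℝ)^2 - 1)/(4*(n:ℝ)^2)) * (M - m)^2) :=
        mul_le_mul_of_nonneg_left step2 (sq_nonneg _)
    _ = ((n ^ 2 - 1 : ℝ) / (4 * n ^ 2)) * (M - m) ^ 4 := by ring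
end

section
/- For real numbers x_1,...,x_n in [m,M] with mean x̄ and fourth central moment m₄ = (1/n)∑(x_i−x̄)⁴, one has m₄ ≤ (x̄−m)(M−x̄)·((x̄−m)² + (M−x̄)² − (x̄−m)(M−x̄)). -/
theorem stmt_6 (n : ℕ) (hn : 1 ≤ n) (m M : ℝ) (x : Fin n → ℝ)
    (hx : ∀ i, x i ∈ Set.Icc m M)
    (xbar m4 : ℝ)
    (hxbar : xbar = (1 / n) * ∑ i, x i)
    (hm4 : m4 = (1 / n) * ∑ i, (x i - xbar) ^ 4) :
    m4 ≤ (xbar - m) * (M - xbar) *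
      ((xbar - m) ^ 2 + (M - xbar) ^ 2 - (xbar - m) * (M - xbar)) := by
  have hn0 : (0:ℝ) < n := by exact_mod_cast Nat.pos_of_ne_zero (by omega)
  set a := xbar - m with ha_def
  set b := M - xbar with hb_def
  have hsum : ∑ i, x i = n * xbar := by
    rw [hxbar]; field_simp
  -- lower/upper bounds on the mean
  have hml : (n:ℝ) * m ≤ ∑ i, x i := by
    calc (n:ℝ) * m = ∑ _i : Fin n, m := by simp [mul_comm]
    _ ≤ ∑ i, x i := Finset.sum_le_sum fun i _ => (hx i).1
  have hMu : ∑ i, x i ≤ (n:ℝ) * M := by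
    calc ∑ i, x i ≤ ∑ _i : Fin n, M := Finset.sum_le_sum fun i _ => (hx i).2
    _ = (n:ℝ) * M := by simp [mul_comm]
  have ha : 0 ≤ a := by
    rw [ha_def]; nlinarith [hml, hsum]
  have hb : 0 ≤ b := by
    rw [hb_def]; nlinarith [hMu, hsum]
  set α := a * b * (a ^ 2 + b ^ 2 - a * b) with hα
  set β := (b - a) * (a ^ 2 + b ^ 2) with hβ
  have key : ∀ i, (x i - xbar) ^ 4 ≤ α + β * (x i - xbar) := by
    intro i
    set y := x i - xbar with hy
    have h1 : 0 ≤ (y + a) * (b - y) := by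
      have h1a : -a ≤ y := by rw [hy, ha_def]; linarith [(hx i).1]
      have h1b : y ≤ b := by rw [hy, hb_def]; linarith [(hx i).2]
      nlinarith
    have hq : 0 ≤ y ^ 2 + (b - a) * y + a * b + (a - b) ^ 2 := by
      nlinarith [sq_nonneg (2 * y + b - a), mul_nonneg ha hb, sq_nonneg (a - b)]
    have := mul_nonneg h1 hq
    rw [hα, hβ]; nlinarith [this]
  have hsum4 : ∑ i, (x i - xbar) ^ 4 ≤ (n:ℝ) * α := by
    calc ∑ i, (x i - xbar) ^ 4 ≤ ∑ i, (α + β * (x i - xbar)) :=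
          Finset.sum_le_sum fun i _ => key i
    _ = (n:ℝ) * α + β * ∑ i, (x i - xbar) := by
          rw [Finset.sum_add_distrib, Finset.mul_sum, Finset.sum_const,
            Finset.card_univ, Fintype.card_fin, nsmul_eq_mul]
    _ = (n:ℝ) * α := by
          rw [Finset.sum_sub_distrib, hsum, Finset.sum_const, Finset.card_univ,
            Fintype.card_fin, nsmul_eq_mul]
          ring
  rw [hm4]
  calc (1 / (n:ℝ)) * ∑ i, (x i - xbar) ^ 4 ≤ (1 / (n:ℝ)) * ((n:ℝ) * α) := by
        apply mul_le_mul_of_nonneg_left hsum4 (by positivity)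
  _ = α := by field_simp
  _ = a * b * (a ^ 2 + b ^ 2 - a * b) := hα
end

section
/- For real numbers x_1,...,x_n in [m,M], the fourth central moment satisfies m₄ ≤ max_{1≤j≤n−1} [j(n−j)(n²−3nj+3j²)/n⁴] · (M−m)⁴. -/
private lemma aux_convex (n : ℕ) : ConvexOn ℝ Set.univ
    (fun z : Fin n → ℝ => ∑ i, (z i - (1/(n:ℝ)) * ∑ j, z j)^4) := by
  have h4 : ConvexOn ℝ (Set.univ : Set ℝ) (fun t : ℝ => t ^ 4) :=
    Even.convexOn_pow ⟨2, by norm_num⟩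
  have key : ∀ i : Fin n, ConvexOn ℝ Set.univ
      (fun z : Fin n → ℝ => (z i - (1/(n:ℝ)) * ∑ j, z j)^4) := by
    intro i
    let L : (Fin n → ℝ) →ₗ[ℝ] ℝ :=
      LinearMap.proj i - (1/(n:ℝ)) • (∑ j, LinearMap.proj j)
    have hL : ∀ z, L z = z i - (1/(n:ℝ)) * ∑ j, z j := by
      intro z
      simp [L, LinearMap.sub_apply, LinearMap.smul_apply, LinearMap.coe_sum,
        Finset.sum_apply, LinearMap.proj_apply, smul_eq_mul]
    have := h4.comp_affineMap L.toAffineMap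
    simp only [Set.preimage_univ] at this
    convert this using 2 with z
    case e'_12 => simp [Function.comp, hL]
    all_goals rfl
  classical
  have : ∀ (t : Finset (Fin n)), ConvexOn ℝ Set.univ
      (fun z : Fin n → ℝ => ∑ i ∈ t, (z i - (1/(n:ℝ)) * ∑ j, z j)^4) := by
    intro t
    induction t using Finset.induction with
    | empty => simpa using convexOn_const (0:ℝ) convex_univ
    | insert _ _ hi ih =>
      simp only [Finset.sum_insert hi]
      exact (key _).add ih
  exact this Finset.univ

private lemma aux_vertex (n : ℕ) (hn : 2 ≤ n) (m M : ℝ) (y : Fin n → ℝ)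
    (hy : ∀ i, y i = m ∨ y i = M) :
    (1/(n:ℝ)) * ∑ i, (y i - (1/(n:ℝ)) * ∑ i, y i)^4 ≤
      (Finset.Icc 1 (n - 1)).sup' (Finset.nonempty_Icc.mpr (Nat.le_sub_of_add_le (by omega)))
        (fun j : ℕ => (j : ℝ) * ((n : ℝ) - j) * ((n : ℝ) ^ 2 - 3 * n * j + 3 * (j : ℝ) ^ 2)
          / (n : ℝ) ^ 4) * (M - m) ^ 4 := by
  classical
  have hn0 : (n:ℝ) ≠ 0 := by positivity
  set s : Finset (Fin n) := Finset.univ.filter (fun i => y i = m) with hs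
  set j : ℕ := s.card with hj
  have hjn : j ≤ n := by
    simpa using (Finset.card_filter_le Finset.univ (fun i => y i = m))
  have hcardc : sᶜ.card = n - j := by
    rw [Finset.card_compl]; simp [hj]
  have hjR : ((n - j : ℕ) : ℝ) = (n:ℝ) - j := by
    push_cast [Nat.cast_sub hjn]; ring
  have hyc : ∀ i ∈ sᶜ, y i = M := by
    intro i hi
    rw [Finset.mem_compl, hs, Finset.mem_filter] at hi
    rcases hy i with h | h
    · exact absurd ⟨Finset.mem_univ i, h⟩ hi
    · exact h
  have hys : ∀ i ∈ s, y i = m := fun i hi => (Finset.mem_filter.mp hi).2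
  have hsplit : ∀ f : Fin n → ℝ, ∑ i, f i = ∑ i ∈ s, f i + ∑ i ∈ sᶜ, f i := by
    intro f
    rw [← Finset.sum_add_sum_compl s f]
  have hsum : ∑ i, y i = (j:ℝ) * m + ((n:ℝ) - j) * M := by
    have h1 : ∑ i ∈ s, y i = (j:ℝ) * m := by
      rw [Finset.sum_congr rfl hys, Finset.sum_const, nsmul_eq_mul]
    have h2 : ∑ i ∈ sᶜ, y i = ((n:ℝ) - j) * M := by
      rw [Finset.sum_congr rfl hyc, Finset.sum_const, nsmul_eq_mul, hcardc, hjR]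
    rw [hsplit y, h1, h2]
  set c : ℝ := (1/(n:ℝ)) * ∑ i, y i with hc
  have hsum4 : ∑ i, (y i - c)^4 = (j:ℝ) * (m - c)^4 + ((n:ℝ) - j) * (M - c)^4 := by
    have h1 : ∑ i ∈ s, (y i - c)^4 = (j:ℝ) * (m - c)^4 := by
      rw [Finset.sum_congr rfl (fun i hi => by rw [hys i hi]), Finset.sum_const, nsmul_eq_mul]
    have h2 : ∑ i ∈ sᶜ, (y i - c)^4 = ((n:ℝ) - j) * (M - c)^4 := by
      rw [Finset.sum_congr rfl (fun i hi => by rw [hyc i hi]), Finset.sum_const, nsmul_eq_mul,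
        hcardc, hjR]
    rw [hsplit (fun i => (y i - c)^4), h1, h2]
  have hval : (1/(n:ℝ)) * ∑ i, (y i - c)^4 =
      ((j:ℝ) * ((n:ℝ)-j)^4 + ((n:ℝ)-j) * (j:ℝ)^4) / (n:ℝ)^5 * (M - m)^4 := by
    rw [hsum4, hc, hsum]
    field_simp
    ring
  rw [hval]
  have hSnn : (0:ℝ) ≤ (Finset.Icc 1 (n - 1)).sup' (Finset.nonempty_Icc.mpr (Nat.le_sub_of_add_le (by omega)))
      (fun j : ℕ => (j : ℝ) * ((n : ℝ) - j) * ((n : ℝ) ^ 2 - 3 * n * j + 3 * (j : ℝ) ^ 2)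
        / (n : ℝ) ^ 4) := by
    refine le_trans ?_ (Finset.le_sup' _ (Finset.mem_Icc.mpr ⟨le_refl 1, by omega⟩))
    have h2 : (2:ℝ) ≤ (n:ℝ) := by exact_mod_cast hn
    have h3 : (0:ℝ) ≤ (1 : ℕ) * ((n : ℝ) - (1:ℕ)) *
        ((n : ℝ) ^ 2 - 3 * n * (1:ℕ) + 3 * ((1:ℕ):ℝ) ^ 2) := by
      have ha : (0:ℝ) ≤ (n:ℝ) - 1 := by linarith
      have hb : (0:ℝ) ≤ (n:ℝ)^2 - 3*n + 3 := by nlinarith [sq_nonneg ((n:ℝ) - 2)]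
      push_cast
      nlinarith [mul_nonneg ha hb]
    positivity
  rcases eq_or_lt_of_le (Nat.zero_le j) with h0 | h1
  · rw [← h0]
    have : (((0:ℕ):ℝ) * ((n:ℝ)-((0:ℕ):ℝ))^4 + ((n:ℝ)-((0:ℕ):ℝ)) * ((0:ℕ):ℝ)^4) / (n:ℝ)^5 = 0 := by
      push_cast; ring
    rw [this, zero_mul]
    exact mul_nonneg hSnn (by positivity)
  rcases eq_or_lt_of_le hjn with hN | hlt
  · rw [hN]
    have : (((n:ℕ):ℝ) * ((n:ℝ)-(n:ℕ))^4 + ((n:ℝ)-(n:ℕ)) * ((n:ℕ):ℝ)^4) / (n:ℝ)^5 = 0 := by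
      push_cast; ring
    rw [this, zero_mul]
    exact mul_nonneg hSnn (by positivity)
  · have hmem : j ∈ Finset.Icc 1 (n - 1) := Finset.mem_Icc.mpr ⟨h1, by omega⟩
    have hSle := Finset.le_sup' (fun j : ℕ => (j : ℝ) * ((n : ℝ) - j) *
      ((n : ℝ) ^ 2 - 3 * n * j + 3 * (j : ℝ) ^ 2) / (n : ℝ) ^ 4) hmem
    have heq : ((j:ℝ) * ((n:ℝ)-j)^4 + ((n:ℝ)-j) * (j:ℝ)^4) / (n:ℝ)^5 =
        (j : ℝ) * ((n : ℝ) - j) * ((n : ℝ) ^ 2 - 3 * n * j + 3 * (j : ℝ) ^ 2) / (n : ℝ) ^ 4 := by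
      field_simp
      ring
    rw [heq]
    exact mul_le_mul_of_nonneg_right hSle (by positivity)

theorem stmt_7 (n : ℕ) (hn : 2 ≤ n) (m M : ℝ) (x : Fin n → ℝ)
    (hx : ∀ i, x i ∈ Set.Icc m M)
    (xbar m4 : ℝ)
    (hxbar : xbar = (1 / n) * ∑ i, x i)
    (hm4 : m4 = (1 / n) * ∑ i, (x i - xbar) ^ 4) :
    m4 ≤ (Finset.Icc 1 (n - 1)).sup' (Finset.nonempty_Icc.mpr (by omega))
        (fun j : ℕ => (j : ℝ) * ((n : ℝ) - j) * ((n : ℝ) ^ 2 - 3 * n * j + 3 * (j : ℝ) ^ 2)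
          / (n : ℝ) ^ 4) * (M - m) ^ 4 := by
  have i0 : Fin n := ⟨0, by omega⟩
  have hmM : m ≤ M := le_trans (hx i0).1 (hx i0).2
  set g : (Fin n → ℝ) → ℝ := fun z => ∑ i, (z i - (1/(n:ℝ)) * ∑ j, z j)^4 with hg
  have hconv := aux_convex n
  have hmem : x ∈ convexHull ℝ (Set.univ.pi fun _ : Fin n => ({m, M} : Set ℝ)) := by
    apply mem_convexHull_pi
    intro i _
    rw [convexHull_pair, segment_eq_Icc hmM]
    exact hx i
  obtain ⟨y, hy, hle⟩ := hconv.exists_ge_of_mem_convexHull (Set.subset_univ _) hmem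
  have hy' : ∀ i, y i = m ∨ y i = M := by
    intro i
    have := hy i (Set.mem_univ i)
    simpa using this
  have hn0 : (0:ℝ) < (n:ℝ) := by positivity
  have key := aux_vertex n hn m M y hy'
  calc m4 = (1/(n:ℝ)) * g x := by rw [hm4, hxbar, hg]
    _ ≤ (1/(n:ℝ)) * g y := by
        apply mul_le_mul_of_nonneg_left hle (by positivity)
    _ ≤ _ := key
end

section
/- For a finite discrete distribution supported in [m,M] with second central moment μ₂ and fourth central moment μ₄, one has μ₂·μ₄ ≤ (4/3⁵)·(M−m)⁶. -/
private lemma key_pt (m M μ y : ℝ) (hm : m ≤ y) (hM : y ≤ M) :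
    (M - m) * (3 * (y - μ) ^ 4 + (M - m) ^ 2 * (y - μ) ^ 2) ≤
      (M - y) * (3 * (m - μ) ^ 4 + (M - m) ^ 2 * (m - μ) ^ 2) +
      (y - m) * (3 * (M - μ) ^ 4 + (M - m) ^ 2 * (M - μ) ^ 2) := by
  have h0 : 0 ≤ (y - m) * (M - y) * (M - m) := by
    have h1 := sub_nonneg.2 hm
    have h2 := sub_nonneg.2 hM
    have h3 : (0:ℝ) ≤ M - m := by linarith
    positivity
  nlinarith [mul_nonneg h0 (sq_nonneg (2*(y-μ) + (m-μ) + (M-μ))),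
    mul_nonneg h0 (sq_nonneg ((m-μ) + (M-μ))),
    mul_nonneg h0 (sq_nonneg (m-μ)), mul_nonneg h0 (sq_nonneg (M-μ)),
    mul_nonneg h0 (sq_nonneg (M-m))]

theorem stmt_8 (n : ℕ) (m M : ℝ) (x p : Fin n → ℝ)
    (hx : ∀ i, x i ∈ Set.Icc m M) (hp : ∀ i, 0 ≤ p i) (hps : ∑ i, p i = 1)
    (μ1 μ2 μ4 : ℝ)
    (hμ1 : μ1 = ∑ i, p i * x i)
    (hμ2 : μ2 = ∑ i, p i * (x i - μ1) ^ 2)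
    (hμ4 : μ4 = ∑ i, p i * (x i - μ1) ^ 4) :
    μ2 * μ4 ≤ (4 / 3 ^ 5) * (M - m) ^ 6 := by
  set L : ℝ := M - m with hL
  set Gm : ℝ := 3 * (m - μ1) ^ 4 + L ^ 2 * (m - μ1) ^ 2 with hGm
  set GM : ℝ := 3 * (M - μ1) ^ 4 + L ^ 2 * (M - μ1) ^ 2 with hGM
  have hμm : m ≤ μ1 := by
    rw [hμ1]
    calc m = ∑ i, p i * m := by rw [← Finset.sum_mul, hps, one_mul]
      _ ≤ ∑ i, p i * x i :=
        Finset.sum_le_sum fun i _ => mul_le_mul_of_nonneg_left (hx i).1 (hp i)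
  have hμM : μ1 ≤ M := by
    rw [hμ1]
    calc ∑ i, p i * x i ≤ ∑ i, p i * M :=
        Finset.sum_le_sum fun i _ => mul_le_mul_of_nonneg_left (hx i).2 (hp i)
      _ = M := by rw [← Finset.sum_mul, hps, one_mul]
  have h2 : 0 ≤ μ2 := by
    rw [hμ2]; exact Finset.sum_nonneg fun i _ => mul_nonneg (hp i) (by positivity)
  have h4 : 0 ≤ μ4 := by
    rw [hμ4]; exact Finset.sum_nonneg fun i _ => mul_nonneg (hp i) (by positivity)
  have hL0 : 0 ≤ L := by rw [hL]; linarith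
  have eM : ∑ i, p i * (M - x i) = M - μ1 := by
    have h : ∑ i, p i * (M - x i) = M * (∑ i, p i) - ∑ i, p i * x i := by
      rw [Finset.mul_sum, ← Finset.sum_sub_distrib]
      exact Finset.sum_congr rfl fun i _ => by ring
    rw [h, hps, hμ1]; ring
  have em : ∑ i, p i * (x i - m) = μ1 - m := by
    have h : ∑ i, p i * (x i - m) = (∑ i, p i * x i) - m * (∑ i, p i) := by
      rw [Finset.mul_sum, ← Finset.sum_sub_distrib]
      exact Finset.sum_congr rfl fun i _ => by ring
    rw [h, hps, hμ1]; ring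
  have hsum : L * (3 * μ4 + L ^ 2 * μ2) ≤ (M - μ1) * Gm + (μ1 - m) * GM := by
    have expand : L * (3 * μ4 + L ^ 2 * μ2) =
        ∑ i, p i * (L * (3 * (x i - μ1) ^ 4 + L ^ 2 * (x i - μ1) ^ 2)) := by
      rw [hμ2, hμ4, mul_add, Finset.mul_sum, Finset.mul_sum, Finset.mul_sum,
        Finset.mul_sum, ← Finset.sum_add_distrib]
      exact Finset.sum_congr rfl fun i _ => by ring
    have expand2 : (M - μ1) * Gm + (μ1 - m) * GM =
        ∑ i, p i * ((M - x i) * Gm + (x i - m) * GM) := by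
      have h : ∑ i, p i * ((M - x i) * Gm + (x i - m) * GM) =
          (∑ i, p i * (M - x i)) * Gm + (∑ i, p i * (x i - m)) * GM := by
        rw [Finset.sum_mul, Finset.sum_mul, ← Finset.sum_add_distrib]
        exact Finset.sum_congr rfl fun i _ => by ring
      rw [h, eM, em]
    rw [expand, expand2]
    refine Finset.sum_le_sum fun i _ => mul_le_mul_of_nonneg_left ?_ (hp i)
    exact key_pt m M μ1 (x i) (hx i).1 (hx i).2
  have hab : (M - μ1) * Gm + (μ1 - m) * GM ≤ (4/9) * L ^ 5 := by
    rw [hGm, hGM, hL]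
    nlinarith [mul_nonneg (by linarith : (0:ℝ) ≤ M - m)
      (sq_nonneg (3 * ((μ1 - m) * (M - μ1)) - (2/3) * (M - m)^2))]
  have hmain : L * (3 * μ4 + L ^ 2 * μ2) ≤ (4/9) * L ^ 5 := le_trans hsum hab
  rcases eq_or_lt_of_le hL0 with hEq | hPos
  · have hmM : m = M := by rw [hL] at hEq; linarith [hEq]
    have hx0 : ∀ i, x i = m := fun i => le_antisymm (hmM ▸ (hx i).2) (hx i).1
    have hμ1m : μ1 = m := by
      rw [hμ1]
      calc ∑ i, p i * x i = ∑ i, p i * m :=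
            Finset.sum_congr rfl fun i _ => by rw [hx0 i]
        _ = m := by rw [← Finset.sum_mul, hps, one_mul]
    have hz : μ2 = 0 := by
      rw [hμ2]
      exact Finset.sum_eq_zero fun i _ => by rw [hx0 i, hμ1m]; ring
    rw [hz, zero_mul]
    positivity
  · have hkey : L ^ 2 * μ2 + 3 * μ4 ≤ (4/9) * L ^ 4 := by
      have h5 : (4/9:ℝ) * L ^ 5 = L * ((4/9) * L ^ 4) := by ring
      have h := hmain
      rw [h5] at h
      have := le_of_mul_le_mul_left h hPos
      linarith
    have hsq : 12 * L ^ 2 * (μ2 * μ4) ≤ (L ^ 2 * μ2 + 3 * μ4) ^ 2 := by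
      nlinarith [sq_nonneg (L ^ 2 * μ2 - 3 * μ4)]
    have hbound : (L ^ 2 * μ2 + 3 * μ4) ^ 2 ≤ ((4/9) * L ^ 4) ^ 2 := by
      have h1 : 0 ≤ L ^ 2 * μ2 + 3 * μ4 := by positivity
      exact pow_le_pow_left₀ h1 hkey 2
    have heq : ((4/9:ℝ) * L ^ 4) ^ 2 = (12 * L ^ 2) * ((4 / 3 ^ 5) * L ^ 6) := by
      ring
    have hfin : (12 * L ^ 2) * (μ2 * μ4) ≤ (12 * L ^ 2) * ((4 / 3 ^ 5) * L ^ 6) := by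
      rw [← heq]
      calc (12 * L ^ 2) * (μ2 * μ4) = 12 * L ^ 2 * (μ2 * μ4) := by ring
        _ ≤ (L ^ 2 * μ2 + 3 * μ4) ^ 2 := hsq
        _ ≤ ((4/9) * L ^ 4) ^ 2 := hbound
    have h12 : (0:ℝ) < 12 * L ^ 2 := by positivity
    have hres := le_of_mul_le_mul_left hfin h12
    rw [hL] at hres
    exact hres
end

section
/- For a finite discrete distribution with second, third and fourth central moments μ₂ > 0, μ₃, μ₄, one has μ₃² + μ₂³ ≤ μ₂·μ₄ (Pearson's inequality). -/
theorem stmt_9 (n : ℕ) (x p : Fin n → ℝ)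
    (hp : ∀ i, 0 ≤ p i) (hps : ∑ i, p i = 1)
    (μ1 μ2 μ3 μ4 : ℝ)
    (hμ1 : μ1 = ∑ i, p i * x i)
    (hμ2 : μ2 = ∑ i, p i * (x i - μ1) ^ 2)
    (hμ3 : μ3 = ∑ i, p i * (x i - μ1) ^ 3)
    (hμ4 : μ4 = ∑ i, p i * (x i - μ1) ^ 4)
    (hμ2pos : 0 < μ2) :
    μ3 ^ 2 + μ2 ^ 3 ≤ μ2 * μ4 := by
  set a : ℝ := μ3 / μ2 with ha
  have hS1 : ∑ i, p i * (x i - μ1) = 0 := by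
    have : ∑ i, p i * (x i - μ1) = (∑ i, p i * x i) - μ1 * ∑ i, p i := by
      rw [Finset.mul_sum, ← Finset.sum_sub_distrib]
      exact Finset.sum_congr rfl (fun i _ => by ring)
    rw [this, hps, ← hμ1]; ring
  have hnn : 0 ≤ ∑ i, p i * ((x i - μ1) ^ 2 - a * (x i - μ1) - μ2) ^ 2 :=
    Finset.sum_nonneg (fun i _ => mul_nonneg (hp i) (sq_nonneg _))
  have hexp : ∑ i, p i * ((x i - μ1) ^ 2 - a * (x i - μ1) - μ2) ^ 2
      = μ4 - 2 * a * μ3 + (a ^ 2 - 2 * μ2) * μ2 + 2 * a * μ2 * 0 + μ2 ^ 2 * 1 := by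
    have : ∑ i, p i * ((x i - μ1) ^ 2 - a * (x i - μ1) - μ2) ^ 2
        = (∑ i, p i * (x i - μ1) ^ 4) - 2 * a * (∑ i, p i * (x i - μ1) ^ 3)
          + (a ^ 2 - 2 * μ2) * (∑ i, p i * (x i - μ1) ^ 2)
          + 2 * a * μ2 * (∑ i, p i * (x i - μ1)) + μ2 ^ 2 * (∑ i, p i) := by
      simp only [Finset.mul_sum, ← Finset.sum_sub_distrib, ← Finset.sum_add_distrib]
      exact Finset.sum_congr rfl (fun i _ => by ring)
    rw [this, ← hμ4, ← hμ3, ← hμ2, hS1, hps]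
  have key : 0 ≤ μ4 - 2 * a * μ3 + (a ^ 2 - 2 * μ2) * μ2 + μ2 ^ 2 := by
    nlinarith [hnn, hexp]
  have haμ2 : a * μ2 = μ3 := div_mul_cancel₀ μ3 (ne_of_gt hμ2pos)
  nlinarith [mul_nonneg (le_of_lt hμ2pos) key, haμ2, sq_nonneg a]
end

section
/- For a finite discrete distribution supported in [m,M] with central moments μ₂ > 0 and μ₃, one has μ₃² ≤ (M−m)²μ₂² − 4μ₂³ ≤ (M−m)⁶/108. -/
theorem stmt_11 (n : ℕ) (m M : ℝ) (x p : Fin n → ℝ)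
    (hx : ∀ i, x i ∈ Set.Icc m M) (hp : ∀ i, 0 ≤ p i) (hps : ∑ i, p i = 1)
    (μ1 μ2 μ3 : ℝ)
    (hμ1 : μ1 = ∑ i, p i * x i)
    (hμ2 : μ2 = ∑ i, p i * (x i - μ1) ^ 2)
    (hμ3 : μ3 = ∑ i, p i * (x i - μ1) ^ 3)
    (hμ2pos : 0 < μ2) :
    μ3 ^ 2 ≤ (M - m) ^ 2 * μ2 ^ 2 - 4 * μ2 ^ 3 ∧
      (M - m) ^ 2 * μ2 ^ 2 - 4 * μ2 ^ 3 ≤ (M - m) ^ 6 / 108 := by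
  set a := m - μ1 with ha
  set b := M - μ1 with hb
  have hma : ∀ i, a ≤ x i - μ1 := fun i => by have := (hx i).1; simp [ha]; linarith
  have hMb : ∀ i, x i - μ1 ≤ b := fun i => by have := (hx i).2; simp [hb]; linarith
  -- sum of p*(x-μ1) = 0
  have hsum0 : ∑ i, p i * (x i - μ1) = 0 := by
    have : ∑ i, p i * (x i - μ1) = (∑ i, p i * x i) - (∑ i, p i) * μ1 := by
      rw [Finset.sum_mul, ← Finset.sum_sub_distrib]
      exact Finset.sum_congr rfl (fun i _ => by ring)
    rw [this, hps, ← hμ1]; ring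
  set μ4 := ∑ i, p i * (x i - μ1) ^ 4 with hμ4
  -- μ2 ≤ -a*b
  have h2P : μ2 ≤ -(a*b) := by
    have h0 : 0 ≤ ∑ i, p i * ((x i - μ1 - a) * (b - (x i - μ1))) :=
      Finset.sum_nonneg fun i _ => mul_nonneg (hp i)
        (mul_nonneg (by linarith [hma i]) (by linarith [hMb i]))
    have e : ∑ i, p i * ((x i - μ1 - a) * (b - (x i - μ1)))
        = (a+b) * (∑ i, p i * (x i - μ1)) - (∑ i, p i * (x i - μ1)^2)
          - (a*b) * (∑ i, p i) := by
      rw [Finset.mul_sum, Finset.mul_sum, ← Finset.sum_sub_distrib, ← Finset.sum_sub_distrib]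
      exact Finset.sum_congr rfl (fun i _ => by ring)
    rw [e, hsum0, hps, ← hμ2] at h0; linarith
  -- μ4 ≤ (a+b)μ3 - a*b*μ2
  have h4 : μ4 ≤ (a+b) * μ3 - (a*b) * μ2 := by
    have h0 : 0 ≤ ∑ i, p i * ((x i - μ1)^2 * ((x i - μ1 - a) * (b - (x i - μ1)))) :=
      Finset.sum_nonneg fun i _ => mul_nonneg (hp i)
        (mul_nonneg (sq_nonneg _) (mul_nonneg (by linarith [hma i]) (by linarith [hMb i])))
    have e : ∑ i, p i * ((x i - μ1)^2 * ((x i - μ1 - a) * (b - (x i - μ1))))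
        = (a+b) * (∑ i, p i * (x i - μ1)^3) - (∑ i, p i * (x i - μ1)^4)
          - (a*b) * (∑ i, p i * (x i - μ1)^2) := by
      rw [Finset.mul_sum, Finset.mul_sum, ← Finset.sum_sub_distrib, ← Finset.sum_sub_distrib]
      exact Finset.sum_congr rfl (fun i _ => by ring)
    rw [e, ← hμ3, ← hμ4, ← hμ2] at h0; linarith
  -- Cauchy–Schwarz: μ3² ≤ μ2 * (μ4 - μ2²)
  have hCS : μ3 ^ 2 ≤ μ2 * (μ4 - μ2 ^ 2) := by
    have key := Finset.sum_mul_sq_le_sq_mul_sq Finset.univ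
      (fun i => Real.sqrt (p i) * (x i - μ1))
      (fun i => Real.sqrt (p i) * ((x i - μ1)^2 - μ2))
    have e1 : ∑ i, (Real.sqrt (p i) * (x i - μ1)) * (Real.sqrt (p i) * ((x i - μ1)^2 - μ2))
        = μ3 - μ2 * (∑ i, p i * (x i - μ1)) := by
      rw [hμ3, Finset.mul_sum, ← Finset.sum_sub_distrib]
      refine Finset.sum_congr rfl (fun i _ => ?_)
      have h := Real.mul_self_sqrt (hp i)
      linear_combination ((x i - μ1) * ((x i - μ1)^2 - μ2)) * h
    have e2 : ∑ i, (Real.sqrt (p i) * (x i - μ1))^2 = μ2 := by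
      rw [hμ2]
      refine Finset.sum_congr rfl (fun i _ => ?_)
      rw [mul_pow, Real.sq_sqrt (hp i)]
    have e3 : ∑ i, (Real.sqrt (p i) * ((x i - μ1)^2 - μ2))^2
        = μ4 - 2 * μ2 * (∑ i, p i * (x i - μ1)^2) + μ2^2 * (∑ i, p i) := by
      rw [hμ4, Finset.mul_sum, Finset.mul_sum, ← Finset.sum_sub_distrib,
        ← Finset.sum_add_distrib]
      refine Finset.sum_congr rfl (fun i _ => ?_)
      have h := Real.mul_self_sqrt (hp i)
      linear_combination (((x i - μ1)^2 - μ2)^2) * h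
    rw [e1, e2, e3, hsum0, ← hμ2, hps] at key
    nlinarith [key]
  have hd : (a+b)^2 + 4 * (-(a*b)) = (M-m)^2 := by rw [ha, hb]; ring
  constructor
  · nlinarith [hCS, mul_le_mul_of_nonneg_left h4 hμ2pos.le,
      sq_nonneg ((a+b)*μ2 - μ3),
      mul_nonneg (mul_nonneg hμ2pos.le hμ2pos.le) (sub_nonneg.2 h2P), hd]
  · nlinarith [mul_nonneg (sq_nonneg (μ2 - (M-m)^2/6))
      (by positivity : (0:ℝ) ≤ μ2 + (M-m)^2/12)]
end

section
/- For a finite discrete distribution supported in [m,M] with mean μ₁', second central moment μ₂ and third central moment μ₃, one has −(4/27)(μ₁'−m)⁵ ≤ μ₂μ₃ ≤ (4/27)(M−μ₁')⁵. -/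
lemma aux_upper (n : ℕ) (M : ℝ) (x p : Fin n → ℝ)
    (hxM : ∀ i, x i ≤ M) (hp : ∀ i, 0 ≤ p i) (hps : ∑ i, p i = 1)
    (μ1 : ℝ) (hμ1 : μ1 = ∑ i, p i * x i) :
    (∑ i, p i * (x i - μ1) ^ 2) * (∑ i, p i * (x i - μ1) ^ 3)
      ≤ (4 / 27) * (M - μ1) ^ 5 := by
  set s := ∑ i, p i * (x i - μ1) ^ 2 with hs_def
  set c := ∑ i, p i * (x i - μ1) ^ 3 with hc_def
  have hb : μ1 ≤ M := by
    rw [hμ1]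
    calc ∑ i, p i * x i ≤ ∑ i, p i * M :=
          Finset.sum_le_sum (fun i _ => mul_le_mul_of_nonneg_left (hxM i) (hp i))
      _ = M := by rw [← Finset.sum_mul, hps, one_mul]
  have hzero : ∑ i, p i * (x i - μ1) = 0 := by
    have h1 : ∑ i, p i * (x i - μ1) = ∑ i, (p i * x i - μ1 * p i) :=
      Finset.sum_congr rfl (fun i _ => by ring)
    rw [h1, Finset.sum_sub_distrib, ← Finset.mul_sum, hps, ← hμ1]; ring
  have hs0 : 0 ≤ s := Finset.sum_nonneg fun i _ => mul_nonneg (hp i) (sq_nonneg _)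
  rcases eq_or_lt_of_le hb with hMeq | hMlt
  · -- M = μ1 : all mass at μ1
    have hterm : ∀ i ∈ Finset.univ, p i * (μ1 - x i) = 0 := by
      rw [← Finset.sum_eq_zero_iff_of_nonneg
        (fun i _ => mul_nonneg (hp i) (by linarith [hxM i, hMeq.symm ▸ le_refl M] : (0:ℝ) ≤ μ1 - x i))]
      have h2 : ∑ i, p i * (μ1 - x i) = - ∑ i, p i * (x i - μ1) := by
        rw [← Finset.sum_neg_distrib]
        exact Finset.sum_congr rfl (fun i _ => by ring)
      rw [h2, hzero, neg_zero]
    have hs : s = 0 := Finset.sum_eq_zero fun i hi => by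
      have h := hterm i hi
      have e : p i * (x i - μ1) ^ 2 = (p i * (μ1 - x i)) * (μ1 - x i) := by ring
      rw [e, h, zero_mul]
    have hc : c = 0 := Finset.sum_eq_zero fun i hi => by
      have h := hterm i hi
      have e : p i * (x i - μ1) ^ 3 = -((p i * (μ1 - x i)) * (x i - μ1) ^ 2) := by ring
      rw [e, h, zero_mul, neg_zero]
    rw [hs, hc, ← hMeq]; norm_num
  · set b := M - μ1 with hb_def
    have hbpos : 0 < b := by simp [hb_def]; linarith
    set l := s / b with hl_def
    have key : ∑ i, p i * ((x i - μ1 + l) ^ 2 * (x i - μ1 - b)) ≤ 0 :=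
      Finset.sum_nonpos fun i _ =>
        mul_nonpos_of_nonneg_of_nonpos (hp i)
          (mul_nonpos_of_nonneg_of_nonpos (sq_nonneg _) (by simp [hb_def]; linarith [hxM i]))
    have expand : ∑ i, p i * ((x i - μ1 + l) ^ 2 * (x i - μ1 - b))
        = c + (2 * l - b) * s + (l ^ 2 - 2 * l * b) * (∑ i, p i * (x i - μ1))
            + (-(l ^ 2) * b) * (∑ i, p i) := by
      rw [hc_def, hs_def, Finset.mul_sum, Finset.mul_sum, Finset.mul_sum,
        ← Finset.sum_add_distrib, ← Finset.sum_add_distrib, ← Finset.sum_add_distrib]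
      exact Finset.sum_congr rfl (fun i _ => by ring)
    rw [expand, hzero, hps] at key
    -- key : c + (2*l - b)*s + 0 + (-(l^2)*b)*1 ≤ 0
    have hlb : l * b = s := by rw [hl_def]; field_simp
    have h4 : l * s = s ^ 2 / b := by rw [hl_def]; field_simp
    have h5 : l ^ 2 * b = l * s := by rw [← hlb]; ring
    have hcle : c ≤ b * s - s ^ 2 / b := by nlinarith [key, h4, h5]
    have hsc : s * c ≤ s * (b * s - s ^ 2 / b) :=
      mul_le_mul_of_nonneg_left hcle hs0
    have hfin : s * (b * s - s ^ 2 / b) ≤ (4 / 27) * b ^ 5 := by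
      rw [← mul_le_mul_iff_of_pos_right hbpos]
      have h3 : s * (b * s - s ^ 2 / b) * b = b ^ 2 * s ^ 2 - s ^ 3 := by
        field_simp
      rw [h3]
      nlinarith [mul_nonneg (sq_nonneg (s - 2 * b ^ 2 / 3))
        (by positivity : (0:ℝ) ≤ s + b ^ 2 / 3)]
    calc s * c ≤ s * (b * s - s ^ 2 / b) := hsc
      _ ≤ (4 / 27) * b ^ 5 := hfin

theorem stmt_12 (n : ℕ) (m M : ℝ) (x p : Fin n → ℝ)
    (hx : ∀ i, x i ∈ Set.Icc m M) (hp : ∀ i, 0 ≤ p i) (hps : ∑ i, p i = 1)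
    (μ1 μ2 μ3 : ℝ)
    (hμ1 : μ1 = ∑ i, p i * x i)
    (hμ2 : μ2 = ∑ i, p i * (x i - μ1) ^ 2)
    (hμ3 : μ3 = ∑ i, p i * (x i - μ1) ^ 3) :
    -(4 / 27) * (μ1 - m) ^ 5 ≤ μ2 * μ3 ∧ μ2 * μ3 ≤ (4 / 27) * (M - μ1) ^ 5 := by
  constructor
  · have h := aux_upper n (-m) (fun i => -x i) p
      (fun i => by simpa using (hx i).1) hp hps (-μ1)
      (by rw [hμ1, ← Finset.sum_neg_distrib]
          exact Finset.sum_congr rfl (fun i _ => by ring))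
    have e2 : ∑ i, p i * ((-x i) - (-μ1)) ^ 2 = μ2 := by
      rw [hμ2]; exact Finset.sum_congr rfl (fun i _ => by ring)
    have e3 : ∑ i, p i * ((-x i) - (-μ1)) ^ 3 = -μ3 := by
      rw [hμ3, ← Finset.sum_neg_distrib]
      exact Finset.sum_congr rfl (fun i _ => by ring)
    simp only [e2, e3] at h
    nlinarith [h]
  · have h := aux_upper n M x p (fun i => (hx i).2) hp hps μ1 hμ1
    rw [hμ2, hμ3]; exact h
end

section
/- For a finite discrete distribution supported in [m,M] with mean μ₁' and third central moment μ₃, one has −(1/4)(μ₁'−m)³ ≤ μ₃ ≤ (1/4)(M−μ₁')³. -/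
theorem stmt_13 (n : ℕ) (m M : ℝ) (x p : Fin n → ℝ)
    (hx : ∀ i, x i ∈ Set.Icc m M) (hp : ∀ i, 0 ≤ p i) (hps : ∑ i, p i = 1)
    (μ1 μ3 : ℝ)
    (hμ1 : μ1 = ∑ i, p i * x i)
    (hμ3 : μ3 = ∑ i, p i * (x i - μ1) ^ 3) :
    -(1 / 4) * (μ1 - m) ^ 3 ≤ μ3 ∧ μ3 ≤ (1 / 4) * (M - μ1) ^ 3 := by
  have h0 : ∑ i, p i * (x i - μ1) = 0 := by
    have h1 : ∑ i, p i * (x i - μ1) = (∑ i, p i * x i) - (∑ i, p i) * μ1 := by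
      rw [Finset.sum_mul, ← Finset.sum_sub_distrib]
      exact Finset.sum_congr rfl fun i _ => by ring
    rw [h1, hps, hμ1]; ring
  constructor
  · -- lower bound
    have key : ∀ i ∈ Finset.univ,
        p i * ((3/4)*(μ1-m)^2*(x i - μ1) - (1/4)*(μ1-m)^3) ≤ p i * (x i - μ1)^3 := by
      intro i _
      apply mul_le_mul_of_nonneg_left _ (hp i)
      nlinarith [(hx i).1, sq_nonneg ((x i - μ1) - (μ1 - m)/2)]
    have hs := Finset.sum_le_sum key
    have h2 : ∑ i, p i * ((3/4)*(μ1-m)^2*(x i - μ1) - (1/4)*(μ1-m)^3)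
        = (3/4)*(μ1-m)^2 * (∑ i, p i * (x i - μ1)) - (1/4)*(μ1-m)^3 * (∑ i, p i) := by
      rw [Finset.mul_sum, Finset.mul_sum, ← Finset.sum_sub_distrib]
      exact Finset.sum_congr rfl fun i _ => by ring
    rw [h2, h0, hps] at hs
    rw [hμ3]; linarith
  · -- upper bound
    have key : ∀ i ∈ Finset.univ,
        p i * (x i - μ1)^3 ≤ p i * ((3/4)*(M-μ1)^2*(x i - μ1) + (1/4)*(M-μ1)^3) := by
      intro i _
      apply mul_le_mul_of_nonneg_left _ (hp i)
      nlinarith [(hx i).2, sq_nonneg ((x i - μ1) + (M - μ1)/2)]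
    have hs := Finset.sum_le_sum key
    have h2 : ∑ i, p i * ((3/4)*(M-μ1)^2*(x i - μ1) + (1/4)*(M-μ1)^3)
        = (3/4)*(M-μ1)^2 * (∑ i, p i * (x i - μ1)) + (1/4)*(M-μ1)^3 * (∑ i, p i) := by
      rw [Finset.mul_sum, Finset.mul_sum, ← Finset.sum_add_distrib]
      exact Finset.sum_congr rfl fun i _ => by ring
    rw [h2, h0, hps] at hs
    rw [hμ3]; linarith
end

section
/- For a finite discrete distribution supported in [m,M] with 0 < m, one has μ₃ ≥ ((μ₂ − μ₁'²)/μ₁')·μ₂, where μ₁' is the mean, μ₂ and μ₃ the second and third central moments. -/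
theorem stmt_14 (n : ℕ) (m M : ℝ) (hm : 0 < m) (x p : Fin n → ℝ)
    (hx : ∀ i, x i ∈ Set.Icc m M) (hp : ∀ i, 0 ≤ p i) (hps : ∑ i, p i = 1)
    (μ1 μ2 μ3 : ℝ)
    (hμ1 : μ1 = ∑ i, p i * x i)
    (hμ2 : μ2 = ∑ i, p i * (x i - μ1) ^ 2)
    (hμ3 : μ3 = ∑ i, p i * (x i - μ1) ^ 3) :
    μ3 ≥ ((μ2 - μ1 ^ 2) / μ1) * μ2 := by
  have hμ1pos : 0 < μ1 := by
    rw [hμ1]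
    calc (0:ℝ) < m := hm
      _ = ∑ i, p i * m := by rw [← Finset.sum_mul, hps, one_mul]
      _ ≤ ∑ i, p i * x i :=
          Finset.sum_le_sum fun i _ => mul_le_mul_of_nonneg_left (hx i).1 (hp i)
  have h1 : ∑ i, p i * (x i - μ1)^2 =
      (∑ i, p i * x i^2) - 2*μ1*(∑ i, p i * x i) + μ1^2 * (∑ i, p i) := by
    rw [Finset.mul_sum, Finset.mul_sum, ← Finset.sum_sub_distrib, ← Finset.sum_add_distrib]
    exact Finset.sum_congr rfl fun i _ => by ring
  rw [h1, hps, ← hμ1] at hμ2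
  have e2 : ∑ i, p i * x i ^ 2 = μ2 + μ1 ^ 2 := by linarith
  have h2 : ∑ i, p i * (x i - μ1)^3 =
      (∑ i, p i * x i^3) - 3*μ1*(∑ i, p i * x i^2) + 3*μ1^2*(∑ i, p i * x i)
        - μ1^3 * (∑ i, p i) := by
    rw [Finset.mul_sum, Finset.mul_sum, Finset.mul_sum, ← Finset.sum_sub_distrib,
      ← Finset.sum_add_distrib, ← Finset.sum_sub_distrib]
    exact Finset.sum_congr rfl fun i _ => by ring
  rw [h2, hps, ← hμ1, e2] at hμ3
  have e3 : ∑ i, p i * x i ^ 3 = μ3 + 3*μ1*μ2 + μ1^3 := by nlinarith [hμ3]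
  set c : ℝ := μ1 + μ2 / μ1 with hc
  have hQ : 0 ≤ ∑ i, p i * x i * (x i - c)^2 :=
    Finset.sum_nonneg fun i _ =>
      mul_nonneg (mul_nonneg (hp i) (le_trans hm.le (hx i).1)) (sq_nonneg _)
  have hQexp : ∑ i, p i * x i * (x i - c)^2 =
      (∑ i, p i * x i^3) - 2*c*(∑ i, p i * x i^2) + c^2*(∑ i, p i * x i) := by
    rw [Finset.mul_sum, Finset.mul_sum, ← Finset.sum_sub_distrib, ← Finset.sum_add_distrib]
    exact Finset.sum_congr rfl fun i _ => by ring
  rw [hQexp, e2, e3, ← hμ1] at hQ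
  have hcc : c * μ1 = μ1^2 + μ2 := by
    rw [hc]; field_simp
  have hkey : 0 ≤ μ1^2 * μ3 + μ1^3 * μ2 - μ1 * μ2^2 := by
    have hnn := mul_nonneg (mul_nonneg hμ1pos.le hμ1pos.le) hQ
    have hid : μ1 * μ1 * (μ3 + 3 * μ1 * μ2 + μ1 ^ 3 - 2 * c * (μ2 + μ1 ^ 2) + c ^ 2 * μ1)
        = μ1^2 * μ3 + μ1^3 * μ2 - μ1 * μ2^2 := by
      linear_combination (μ1 * (c * μ1 - μ1^2 - μ2)) * hcc
    linarith [hid, hnn]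
  rw [ge_iff_le, div_mul_eq_mul_div, div_le_iff₀ hμ1pos]
  nlinarith [hkey, hμ1pos]
end

section
/- For real numbers x_1,...,x_n in [m,M] with n ≥ 2, mean x̄, m₂ = (1/n)∑(x_i−x̄)², m₄ = (1/n)∑(x_i−x̄)⁴ > 0, one has m₂⁴/m₄ ≤ ((n−1)³/(n²−3n+3))·(x̄−m)⁴. -/
set_option maxHeartbeats 1000000


theorem stmt_15 (n : ℕ) (hn : 2 ≤ n) (m M : ℝ) (x : Fin n → ℝ)
    (hx : ∀ i, x i ∈ Set.Icc m M)
    (xbar m2 m4 : ℝ)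
    (hxbar : xbar = (1 / n) * ∑ i, x i)
    (hm2 : m2 = (1 / n) * ∑ i, (x i - xbar) ^ 2)
    (hm4 : m4 = (1 / n) * ∑ i, (x i - xbar) ^ 4)
    (hm4pos : 0 < m4) :
    m2 ^ 4 / m4 ≤ ((n - 1 : ℝ) ^ 3 / ((n : ℝ) ^ 2 - 3 * n + 3)) * (xbar - m) ^ 4 := by
  have hN2 : (2:ℝ) ≤ (n:ℝ) := by exact_mod_cast hn
  have hNpos : (0:ℝ) < (n:ℝ) := by linarith
  have hN0 : (n:ℝ) ≠ 0 := ne_of_gt hNpos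
  have hQpos : (0:ℝ) < (n:ℝ) ^ 2 - 3 * n + 3 := by nlinarith
  set N : ℝ := (n:ℝ) with hNdef
  set a : ℝ := xbar - m with hadef
  set m3 : ℝ := (1 / N) * ∑ i, (x i - xbar) ^ 3 with hm3
  have hcard : (Finset.univ : Finset (Fin n)).card = n := by simp
  -- sum of deviations is zero
  have hsum : ∑ i, (x i - xbar) = 0 := by
    rw [Finset.sum_sub_distrib, Finset.sum_const, hcard, nsmul_eq_mul, hxbar]
    field_simp
    rw [← hNdef]; ring
  have hs2 : ∑ i, (x i - xbar) ^ 2 = N * m2 := by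
    rw [hm2]; field_simp
  have hs3 : ∑ i, (x i - xbar) ^ 3 = N * m3 := by
    rw [hm3]; field_simp
  have hs4 : ∑ i, (x i - xbar) ^ 4 = N * m4 := by
    rw [hm4]; field_simp
  -- a ≥ 0
  have hma : ∀ i, m ≤ x i := fun i => (hx i).1
  have ha0 : 0 ≤ a := by
    have h1 : (n:ℝ) * m ≤ ∑ i, x i := by
      calc (n:ℝ) * m = ∑ _i : Fin n, m := by
            rw [Finset.sum_const, hcard, nsmul_eq_mul]
        _ ≤ ∑ i, x i := Finset.sum_le_sum fun i _ => hma i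
    have : m ≤ xbar := by
      rw [hxbar]
      rw [div_mul_eq_mul_div, one_mul, le_div_iff₀ hNpos]
      linarith
    simp [hadef]; linarith
  -- lower bound on deviations
  have hda : ∀ i, -a ≤ x i - xbar := by
    intro i
    have := hma i
    simp [hadef]; linarith
  -- upper bound on deviations
  have hub : ∀ i, x i - xbar ≤ (N - 1) * a := by
    intro i
    have hsplit : (x i - xbar) + ∑ j ∈ Finset.univ.erase i, (x j - xbar)
        = ∑ j, (x j - xbar) := Finset.add_sum_erase _ (fun j => x j - xbar) (Finset.mem_univ i)
    have hcard' : (Finset.univ.erase i).card = n - 1 := by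
      rw [Finset.card_erase_of_mem (Finset.mem_univ i), hcard]
    have hlb : -((N - 1) * a) ≤ ∑ j ∈ Finset.univ.erase i, (x j - xbar) := by
      have h1 : ∑ _j ∈ Finset.univ.erase i, (-a) ≤
          ∑ j ∈ Finset.univ.erase i, (x j - xbar) :=
        Finset.sum_le_sum fun j _ => hda j
      have h2 : ∑ _j ∈ Finset.univ.erase i, (-a) = ((n:ℝ) - 1) * (-a) := by
        rw [Finset.sum_const, hcard', nsmul_eq_mul]
        have : ((n - 1 : ℕ) : ℝ) = (n:ℝ) - 1 := by
          have : (1:ℕ) ≤ n := by omega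
          push_cast [Nat.cast_sub this]; ring
        rw [this]
      rw [h2] at h1
      calc -((N - 1) * a) = ((n:ℝ) - 1) * (-a) := by ring
        _ ≤ _ := h1
    rw [hsum] at hsplit
    linarith
  -- F3 : m2 ≤ (N-1) a²
  have hm2nn : 0 ≤ m2 := by
    rw [hm2]
    apply mul_nonneg (by positivity)
    exact Finset.sum_nonneg fun i _ => sq_nonneg _
  have hF3 : m2 ≤ (N - 1) * a ^ 2 := by
    have t2 : ∑ i, (x i - xbar) * ((x i - xbar) + a)
        ≤ ∑ i, (N - 1) * a * ((x i - xbar) + a) :=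
      Finset.sum_le_sum fun i _ => by nlinarith [hda i, hub i]
    have e1 : ∑ i, (x i - xbar) * ((x i - xbar) + a)
        = (∑ i, (x i - xbar) ^ 2) + a * ∑ i, (x i - xbar) := by
      rw [Finset.mul_sum, ← Finset.sum_add_distrib]
      exact Finset.sum_congr rfl fun i _ => by ring
    have e2 : ∑ i, (N - 1) * a * ((x i - xbar) + a)
        = (N - 1) * a * ((∑ i, (x i - xbar)) + N * a) := by
      rw [← Finset.mul_sum, Finset.sum_add_distrib, Finset.sum_const, hcard,
        nsmul_eq_mul]
    rw [e1, e2, hsum, hs2] at t2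
    have : N * m2 ≤ N * ((N - 1) * a ^ 2) := by nlinarith
    exact le_of_mul_le_mul_left this hNpos
  -- F1 : m2² ≤ a m3 + a² m2  (Cauchy–Schwarz with weights d+a ≥ 0)
  have hF1 : m2 ^ 2 ≤ a * m3 + a ^ 2 * m2 := by
    have hcs := Finset.sum_sq_le_sum_mul_sum_of_sq_eq_mul Finset.univ
      (r := fun i => (x i - xbar) * ((x i - xbar) + a))
      (f := fun i => (x i - xbar) + a)
      (g := fun i => (x i - xbar) ^ 2 * ((x i - xbar) + a))
      (fun i _ => by have := hda i; linarith)
      (fun i _ => by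
        have := hda i
        exact mul_nonneg (sq_nonneg _) (by linarith))
      (fun i _ => by ring)
    have e1 : ∑ i, (x i - xbar) * ((x i - xbar) + a)
        = (∑ i, (x i - xbar) ^ 2) + a * ∑ i, (x i - xbar) := by
      rw [Finset.mul_sum, ← Finset.sum_add_distrib]
      exact Finset.sum_congr rfl fun i _ => by ring
    have e2 : ∑ i, ((x i - xbar) + a) = (∑ i, (x i - xbar)) + N * a := by
      rw [Finset.sum_add_distrib, Finset.sum_const, hcard, nsmul_eq_mul]
    have e3 : ∑ i, (x i - xbar) ^ 2 * ((x i - xbar) + a)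
        = (∑ i, (x i - xbar) ^ 3) + a * ∑ i, (x i - xbar) ^ 2 := by
      rw [Finset.mul_sum, ← Finset.sum_add_distrib]
      exact Finset.sum_congr rfl fun i _ => by ring
    rw [e1, e2, e3, hsum, hs2, hs3] at hcs
    have hN2pos : (0:ℝ) < N ^ 2 := by positivity
    have : N ^ 2 * m2 ^ 2 ≤ N ^ 2 * (a * m3 + a ^ 2 * m2) := by nlinarith
    exact le_of_mul_le_mul_left this hN2pos
  -- F2 : ((N-1) a m2 + (N-2) m3)² ≤ m4 ((N-1)² a² + (N-2)² m2)
  have hF2 : ((N - 1) * a * m2 + (N - 2) * m3) ^ 2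
      ≤ m4 * ((N - 1) ^ 2 * a ^ 2 + (N - 2) ^ 2 * m2) := by
    have hcs := Finset.sum_mul_sq_le_sq_mul_sq Finset.univ
      (fun i => (x i - xbar) ^ 2)
      (fun i => (N - 1) * a + (N - 2) * (x i - xbar))
    have e1 : ∑ i, (x i - xbar) ^ 2 * ((N - 1) * a + (N - 2) * (x i - xbar))
        = (N - 1) * a * (∑ i, (x i - xbar) ^ 2)
          + (N - 2) * ∑ i, (x i - xbar) ^ 3 := by
      rw [Finset.mul_sum, Finset.mul_sum, ← Finset.sum_add_distrib]
      exact Finset.sum_congr rfl fun i _ => by ring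
    have e2 : ∑ i, ((x i - xbar) ^ 2) ^ 2 = ∑ i, (x i - xbar) ^ 4 :=
      Finset.sum_congr rfl fun i _ => by ring
    have e3 : ∑ i, ((N - 1) * a + (N - 2) * (x i - xbar)) ^ 2
        = N * ((N - 1) ^ 2 * a ^ 2)
          + 2 * (N - 1) * (N - 2) * a * (∑ i, (x i - xbar))
          + (N - 2) ^ 2 * ∑ i, (x i - xbar) ^ 2 := by
      have : ∀ i ∈ Finset.univ, ((N - 1) * a + (N - 2) * (x i - xbar)) ^ 2
          = (N - 1) ^ 2 * a ^ 2 + 2 * (N - 1) * (N - 2) * a * (x i - xbar)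
            + (N - 2) ^ 2 * (x i - xbar) ^ 2 := fun i _ => by ring
      rw [Finset.sum_congr rfl this, Finset.sum_add_distrib,
        Finset.sum_add_distrib, Finset.sum_const, hcard, nsmul_eq_mul,
        ← Finset.mul_sum, ← Finset.mul_sum]
    rw [e1, e2, e3, hsum, hs2, hs3, hs4] at hcs
    have hN2pos : (0:ℝ) < N ^ 2 := by positivity
    have : N ^ 2 * ((N - 1) * a * m2 + (N - 2) * m3) ^ 2
        ≤ N ^ 2 * (m4 * ((N - 1) ^ 2 * a ^ 2 + (N - 2) ^ 2 * m2)) := by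
      nlinarith
    exact le_of_mul_le_mul_left this hN2pos
  -- Reduce the goal to a polynomial inequality
  rw [div_le_iff₀ hm4pos, div_mul_eq_mul_div, div_mul_eq_mul_div, le_div_iff₀ hQpos]
  show m2 ^ 4 * (N ^ 2 - 3 * N + 3) ≤ (N - 1) ^ 3 * a ^ 4 * m4
  rcases eq_or_lt_of_le hm2nn with hm20 | hm2pos
  · -- m2 = 0 : trivial
    have h1 : (0:ℝ) ≤ (N - 1) ^ 3 * a ^ 4 * m4 := by
      apply mul_nonneg (mul_nonneg (by nlinarith) (by positivity)) hm4pos.le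
    rw [← hm20]; simpa using h1
  · -- main case: a > 0
    have hapos : 0 < a := by
      rcases eq_or_lt_of_le ha0 with h | h
      · exfalso; rw [← h] at hF3; simp at hF3; nlinarith
      · exact h
    have hKpos : 0 < (N - 1) ^ 2 * a ^ 2 + (N - 2) ^ 2 * m2 := by
      nlinarith [mul_nonneg (sq_nonneg (N - 2)) hm2nn]
    have hY0 : (0:ℝ) ≤ m2 * ((N - 2) * m2 + a ^ 2) := mul_nonneg hm2nn (by nlinarith)
    have haX : m2 * ((N - 2) * m2 + a ^ 2) ≤ a * ((N - 1) * a * m2 + (N - 2) * m3) := by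
      have h1 : (0:ℝ) ≤ N - 2 := by linarith
      have h2 : 0 ≤ a * m3 + a ^ 2 * m2 - m2 ^ 2 := by linarith
      have h3 := mul_nonneg h1 h2
      have key : a * ((N - 1) * a * m2 + (N - 2) * m3) - m2 * ((N - 2) * m2 + a ^ 2)
          = (N - 2) * (a * m3 + a ^ 2 * m2 - m2 ^ 2) := by ring
      linarith
    have hYX : (m2 * ((N - 2) * m2 + a ^ 2)) ^ 2
        ≤ (a * ((N - 1) * a * m2 + (N - 2) * m3)) ^ 2 := pow_le_pow_left₀ hY0 haX 2
    have hcube : (0:ℝ) ≤ (N - 1) ^ 3 := by nlinarith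
    have hquad : 0 ≤ (N ^ 2 - 3 * N + 3) * (N - 2) ^ 2 * m2 ^ 2
        + (N - 1) * (2 * (N - 1) ^ 2 - 2 * (N - 1) + 1) * m2 * a ^ 2
        + (N - 1) ^ 2 * a ^ 4 := by
      have q1 : (0:ℝ) ≤ (N ^ 2 - 3 * N + 3) * (N - 2) ^ 2 * m2 ^ 2 :=
        mul_nonneg (mul_nonneg hQpos.le (sq_nonneg _)) (sq_nonneg _)
      have q2 : (0:ℝ) ≤ (N - 1) * (2 * (N - 1) ^ 2 - 2 * (N - 1) + 1) * m2 * a ^ 2 :=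
        mul_nonneg (mul_nonneg (mul_nonneg (by linarith) (by nlinarith)) hm2nn)
          (sq_nonneg _)
      have q3 : (0:ℝ) ≤ (N - 1) ^ 2 * a ^ 4 := by positivity
      linarith
    have hD : (N ^ 2 - 3 * N + 3) * m2 ^ 2 * ((N - 1) ^ 2 * a ^ 2 + (N - 2) ^ 2 * m2)
        ≤ (N - 1) ^ 3 * a ^ 2 * ((N - 2) * m2 + a ^ 2) ^ 2 := by
      have hsub : 0 ≤ (N - 1) * a ^ 2 - m2 := by linarith
      have hp := mul_nonneg hsub hquad
      have key : (N - 1) ^ 3 * a ^ 2 * ((N - 2) * m2 + a ^ 2) ^ 2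
          - (N ^ 2 - 3 * N + 3) * m2 ^ 2 * ((N - 1) ^ 2 * a ^ 2 + (N - 2) ^ 2 * m2)
          = ((N - 1) * a ^ 2 - m2) *
            ((N ^ 2 - 3 * N + 3) * (N - 2) ^ 2 * m2 ^ 2
              + (N - 1) * (2 * (N - 1) ^ 2 - 2 * (N - 1) + 1) * m2 * a ^ 2
              + (N - 1) ^ 2 * a ^ 4) := by ring
      linarith
    have c1 : (N ^ 2 - 3 * N + 3) * m2 ^ 4 * ((N - 1) ^ 2 * a ^ 2 + (N - 2) ^ 2 * m2)
        ≤ (N - 1) ^ 3 * a ^ 2 * (m2 * ((N - 2) * m2 + a ^ 2)) ^ 2 := by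
      have h5 := mul_le_mul_of_nonneg_left hD (sq_nonneg m2)
      linarith [h5]
    have c3 : (N - 1) ^ 3 * a ^ 2 * (a * ((N - 1) * a * m2 + (N - 2) * m3)) ^ 2
        ≤ (N - 1) ^ 3 * a ^ 4 * m4 * ((N - 1) ^ 2 * a ^ 2 + (N - 2) ^ 2 * m2) := by
      have h4 : (0:ℝ) ≤ (N - 1) ^ 3 * a ^ 4 := mul_nonneg hcube (by positivity)
      have h5 := mul_le_mul_of_nonneg_left hF2 h4
      linarith [h5]
    have c2 : (N - 1) ^ 3 * a ^ 2 * (m2 * ((N - 2) * m2 + a ^ 2)) ^ 2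
        ≤ (N - 1) ^ 3 * a ^ 2 * (a * ((N - 1) * a * m2 + (N - 2) * m3)) ^ 2 :=
      mul_le_mul_of_nonneg_left hYX (mul_nonneg hcube (sq_nonneg a))
    have hfin : (m2 ^ 4 * (N ^ 2 - 3 * N + 3)) * ((N - 1) ^ 2 * a ^ 2 + (N - 2) ^ 2 * m2)
        ≤ ((N - 1) ^ 3 * a ^ 4 * m4) * ((N - 1) ^ 2 * a ^ 2 + (N - 2) ^ 2 * m2) := by
      linarith [c1, c2, c3]
    exact le_of_mul_le_mul_right hfin hKpos
end

section
/- For real numbers x_1,...,x_n (n ≥ 2, not all equal) with mean x̄, m₂ and m₄ the second and fourth central moments, m = min x_i and M = max x_i, one has m ≤ x̄ − ((n²−3n+3)/(n−1)³ · m₂⁴/m₄)^{1/4} and M ≥ x̄ + ((n²−3n+3)/(n−1)³ · m₂⁴/m₄)^{1/4}. -/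
open Finset

set_option maxHeartbeats 1000000

lemma phi_mono (s a : ℝ) (h1 : 1 ≤ a) (h2 : a ≤ s) :
    (s^2 - s + 1) * a^3 ≤ s^3 * (a^2 - a + 1) := by
  nlinarith [mul_nonneg (sub_nonneg.2 h2) (sub_nonneg.2 h1), sq_nonneg (s-a), sq_nonneg (a-1),
    mul_nonneg (mul_nonneg (sub_nonneg.2 h2) (sub_nonneg.2 h1)) (sub_nonneg.2 h1),
    mul_nonneg (mul_nonneg (sub_nonneg.2 h2) (sub_nonneg.2 h2)) (sub_nonneg.2 h1),
    sq_nonneg a, sq_nonneg s]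

lemma core (n : ℕ) (hn : 2 ≤ n) (d : Fin n → ℝ) (hsum : ∑ i, d i = 0)
    (hS2 : 0 < ∑ i, (d i)^2) (D : ℝ) (hD : ∀ i, d i ≤ D) :
    0 < D ∧ ((n:ℝ)^2 - 3*(n:ℝ) + 3) * (∑ i, (d i)^2)^4 ≤
      D^4 * (((n:ℝ)-1)^3 * ((n:ℝ)^3 * ∑ i, (d i)^4)) := by
  set N : ℝ := (n:ℝ) with hNdef
  set S2 : ℝ := ∑ i, (d i)^2 with hS2def
  set S4 : ℝ := ∑ i, (d i)^4 with hS4def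
  clear_value N S2 S4
  have hN : (2:ℝ) ≤ N := by rw [hNdef]; exact_mod_cast hn
  -- D > 0
  have hD0 : 0 < D := by
    by_contra h
    push_neg at h
    have hz : ∀ i ∈ univ, d i = 0 := by
      rw [← Finset.sum_eq_zero_iff_of_nonpos (fun i _ => le_trans (hD i) h)]
      exact hsum
    have : S2 = 0 := by
      rw [hS2def]; exact Finset.sum_eq_zero (fun i hi => by rw [hz i hi]; ring)
    linarith
  -- S4 > 0
  have hS4pos : 0 < S4 := by
    by_contra h
    push_neg at h
    have hnn : (0:ℝ) ≤ S4 := by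
      rw [hS4def]; exact Finset.sum_nonneg (fun i _ => by positivity)
    have hz : ∀ i ∈ univ, (d i)^4 = 0 := by
      rw [← Finset.sum_eq_zero_iff_of_nonneg (fun i _ => by positivity)]
      rw [← hS4def]; linarith
    have : S2 = 0 := by
      rw [hS2def]
      exact Finset.sum_eq_zero (fun i _ => by
        have := hz i (mem_univ i); nlinarith [this])
    linarith
  refine ⟨hD0, ?_⟩
  -- lower bound each d i
  have hdl : ∀ i, -(N - 1) * D ≤ d i := by
    intro i
    have h1 : ∑ j ∈ univ.erase i, d j ≤ (univ.erase i).card • D :=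
      Finset.sum_le_card_nsmul _ _ _ (fun j _ => hD j)
    have h2 : (univ.erase i).card = n - 1 := by simp [Finset.card_erase_of_mem]
    rw [h2, nsmul_eq_mul] at h1
    have hc : ((n - 1 : ℕ) : ℝ) = N - 1 := by
      have h1n : 1 ≤ n := by omega
      rw [hNdef]; push_cast [Nat.cast_sub h1n]; ring
    rw [hc] at h1
    have h3 : ∑ j ∈ univ.erase i, d j = -(d i) := by
      rw [Finset.sum_erase_eq_sub (mem_univ i), hsum]; ring
    rw [h3] at h1; linarith
  -- S2 ≤ N (N-1) D^2
  have hS2ub : S2 ≤ N * (N - 1) * D^2 := by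
    have hpt : ∀ i ∈ univ, (d i)^2 ≤ (2-N)*D*(d i) + (N-1)*D^2 := by
      intro i _
      nlinarith [mul_nonneg (sub_nonneg.2 (hD i)) (by linarith [hdl i] : (0:ℝ) ≤ d i + (N-1)*D)]
    have hs := Finset.sum_le_sum hpt
    rw [Finset.sum_add_distrib, ← Finset.mul_sum, Finset.sum_const, card_univ] at hs
    simp only [Fintype.card_fin, nsmul_eq_mul, hsum, mul_zero] at hs
    rw [← hS2def] at hs
    have : (n:ℝ) * ((N-1)*D^2) = N * (N-1) * D^2 := by rw [hNdef]; ring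
    linarith [this ▸ hs]
  have hNpos : (0:ℝ) < N := by linarith
  have hcube : (0:ℝ) ≤ (N-1)^3 := pow_nonneg (by linarith) 3
  by_cases hcase : S2 ≤ N * D^2
  · -- small variance case: Cauchy–Schwarz
    have cauchy : S2^2 ≤ N * S4 := by
      have hcs := sq_sum_le_card_mul_sum_sq (s := (univ : Finset (Fin n))) (f := fun i => (d i)^2)
      simp only [card_univ, Fintype.card_fin] at hcs
      calc S2^2 = (∑ i, (d i)^2)^2 := by rw [hS2def]
      _ ≤ (n:ℝ) * ∑ i, ((d i)^2)^2 := by exact_mod_cast hcs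
      _ = N * S4 := by
          rw [hNdef, hS4def]; congr 1; apply Finset.sum_congr rfl; intros; ring
    have hS2nn : 0 ≤ S2 := le_of_lt hS2
    have h2' : S2^2 ≤ N^2 * D^4 := by nlinarith
    have h3 : N^2 - 3*N + 3 ≤ (N-1)^3 := by nlinarith [sq_nonneg (N-1)]
    have h4 : S2^4 ≤ N^3 * S4 * D^4 := by
      nlinarith [mul_le_mul cauchy h2' (by positivity) (by positivity : (0:ℝ) ≤ N * S4)]
    have hc0 : 0 < N^2 - 3*N + 3 := by nlinarith
    calc (N^2 - 3*N + 3) * S2^4 ≤ (N^2 - 3*N + 3) * (N^3 * S4 * D^4) :=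
          mul_le_mul_of_nonneg_left h4 hc0.le
    _ ≤ (N-1)^3 * (N^3 * S4 * D^4) := mul_le_mul_of_nonneg_right h3 (by positivity)
    _ = D^4 * ((N-1)^3 * (N^3 * S4)) := by ring
  · -- large variance case
    push_neg at hcase
    obtain ⟨a, hadef⟩ : ∃ a : ℝ, a = S2 / (N * D^2) := ⟨_, rfl⟩
    have hDsq : 0 < N * D^2 := by positivity
    have ha1 : 1 < a := by rw [hadef, lt_div_iff₀ hDsq]; linarith
    have haub : a ≤ N - 1 := by
      rw [hadef, div_le_iff₀ hDsq]; nlinarith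
    have hS2eq : S2 = a * N * D^2 := by
      rw [hadef]; field_simp
    have hpt : ∀ i ∈ univ,
        (3*a^2-2*a+1)*D^2*(d i)^2 + 2*a*(a-1)^2*D^3*(d i) - (2*a-1)*a^2*D^4 ≤ (d i)^4 := by
      intro i _
      have hA : 0 ≤ D - d i := sub_nonneg.2 (hD i)
      have hB : 0 ≤ (2*a-1)*D - d i := by nlinarith [hD i]
      nlinarith [mul_nonneg (mul_nonneg hA hB) (sq_nonneg (d i + a*D))]
    have hsum4 : (3*a^2-2*a+1)*D^2*S2 - N*((2*a-1)*a^2*D^4) ≤ S4 := by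
      have hs := Finset.sum_le_sum hpt
      rw [Finset.sum_sub_distrib, Finset.sum_add_distrib, ← Finset.mul_sum, ← Finset.mul_sum,
        Finset.sum_const, card_univ] at hs
      simp only [Fintype.card_fin, nsmul_eq_mul, hsum, mul_zero] at hs
      rw [← hS2def, ← hS4def] at hs
      have he : (n:ℝ) * ((2*a-1)*a^2*D^4) = N*((2*a-1)*a^2*D^4) := by rw [hNdef]
      linarith [he ▸ hs]
    -- S4 ≥ N D^4 (a^3 - a^2 + a)
    have hS4lb : N * D^4 * (a^3 - a^2 + a) ≤ S4 := by
      calc N * D^4 * (a^3 - a^2 + a)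
          = (3*a^2-2*a+1)*D^2*(a*N*D^2) - N*((2*a-1)*a^2*D^4) := by ring
      _ = (3*a^2-2*a+1)*D^2*S2 - N*((2*a-1)*a^2*D^4) := by rw [← hS2eq]
      _ ≤ S4 := hsum4
    -- key polynomial inequality with s = N - 1
    have hkey : (N^2 - 3*N + 3) * a^4 ≤ (N-1)^3 * (a^3 - a^2 + a) := by
      have h1 : (1:ℝ) ≤ a := le_of_lt ha1
      have hs := phi_mono (N-1) a h1 haub
      have ha0 : (0:ℝ) ≤ a := by linarith
      nlinarith [mul_le_mul_of_nonneg_right hs ha0]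
    -- conclude
    rw [hS2eq]
    calc (N^2 - 3*N + 3) * (a * N * D^2)^4 = ((N^2-3*N+3) * a^4) * (N^4 * D^8) := by ring
    _ ≤ ((N-1)^3 * (a^3 - a^2 + a)) * (N^4 * D^8) := by
        apply mul_le_mul_of_nonneg_right hkey (by positivity)
    _ = D^4 * ((N-1)^3 * (N^3 * (N * D^4 * (a^3 - a^2 + a)))) := by ring
    _ ≤ D^4 * ((N-1)^3 * (N^3 * S4)) := by
        have hh := mul_le_mul_of_nonneg_left hS4lb (by positivity : (0:ℝ) ≤ N^3)
        have hh2 := mul_le_mul_of_nonneg_left hh hcube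
        exact mul_le_mul_of_nonneg_left hh2 (by positivity : (0:ℝ) ≤ D^4)

theorem stmt_16 (n : ℕ) (hn : 2 ≤ n) (x : Fin n → ℝ)
    (hne : ∃ i j, x i ≠ x j)
    (xbar m2 m4 : ℝ)
    (hxbar : xbar = (1 / n) * ∑ i, x i)
    (hm2 : m2 = (1 / n) * ∑ i, (x i - xbar) ^ 2)
    (hm4 : m4 = (1 / n) * ∑ i, (x i - xbar) ^ 4) :
    Finset.univ.inf' (Finset.univ_nonempty_iff.mpr (by exact Fin.pos_iff_nonempty.mp (by omega))) x ≤
        xbar - (((n : ℝ) ^ 2 - 3 * n + 3) / ((n : ℝ) - 1) ^ 3 * (m2 ^ 4 / m4)) ^ ((1 : ℝ) / 4) ∧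
      Finset.univ.sup' (Finset.univ_nonempty_iff.mpr (by exact Fin.pos_iff_nonempty.mp (by omega))) x ≥
        xbar + (((n : ℝ) ^ 2 - 3 * n + 3) / ((n : ℝ) - 1) ^ 3 * (m2 ^ 4 / m4)) ^ ((1 : ℝ) / 4) := by
  have hnR : ((n:ℝ)) ≠ 0 := Nat.cast_ne_zero.2 (by omega)
  have hN2 : (2:ℝ) ≤ (n:ℝ) := by exact_mod_cast hn
  have hsum : ∑ i, (x i - xbar) = 0 := by
    rw [Finset.sum_sub_distrib, Finset.sum_const, card_univ]
    simp only [Fintype.card_fin, nsmul_eq_mul]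
    rw [hxbar]; field_simp; ring
  have hex : ∃ i, x i ≠ xbar := by
    obtain ⟨i, j, hij⟩ := hne
    by_cases h : x i = xbar
    · exact ⟨j, fun hj => hij (by rw [h, hj])⟩
    · exact ⟨i, h⟩
  obtain ⟨i0, hi0⟩ := hex
  have hd0 : x i0 - xbar ≠ 0 := sub_ne_zero.2 hi0
  have hS2 : 0 < ∑ i, (x i - xbar)^2 :=
    Finset.sum_pos' (fun i _ => by positivity) ⟨i0, mem_univ i0, by positivity⟩
  have hS4 : 0 < ∑ i, (x i - xbar)^4 :=
    Finset.sum_pos' (fun i _ => by positivity) ⟨i0, mem_univ i0, by positivity⟩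
  have hc0 : (0:ℝ) < (n:ℝ)^2 - 3*(n:ℝ) + 3 := by nlinarith
  have hden : (0:ℝ) < ((n:ℝ)-1)^3 * ((n:ℝ)^3 * ∑ i, (x i - xbar)^4) := by
    have h1 : (0:ℝ) < (n:ℝ) - 1 := by linarith
    have h2 : (0:ℝ) < (n:ℝ) := by linarith
    positivity
  -- rewrite the K expression
  have hKeq : ((n:ℝ)^2 - 3*(n:ℝ) + 3) / ((n:ℝ)-1)^3 * (m2^4 / m4) =
      (((n:ℝ)^2 - 3*(n:ℝ) + 3) * (∑ i, (x i - xbar)^2)^4) /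
        (((n:ℝ)-1)^3 * ((n:ℝ)^3 * ∑ i, (x i - xbar)^4)) := by
    rw [hm2, hm4]
    have h1 : ((n:ℝ)-1) ≠ 0 := by intro h; nlinarith
    have h4 : (∑ i, (x i - xbar)^4) ≠ 0 := ne_of_gt hS4
    field_simp
  set K : ℝ := ((n:ℝ)^2 - 3*(n:ℝ) + 3) / ((n:ℝ)-1)^3 * (m2^4 / m4) with hKdef
  have hK0 : 0 ≤ K := by
    rw [hKeq]
    exact div_nonneg (by positivity) hden.le
  -- a helper to convert the core bound into the rpow bound
  have step : ∀ D : ℝ, 0 < D →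
      ((n:ℝ)^2 - 3*(n:ℝ) + 3) * (∑ i, (x i - xbar)^2)^4 ≤
        D^4 * (((n:ℝ)-1)^3 * ((n:ℝ)^3 * ∑ i, (x i - xbar)^4)) →
      K ^ ((1:ℝ)/4) ≤ D := by
    intro D hDpos hle
    have hKle : K ≤ D^4 := by
      rw [hKeq, div_le_iff₀ hden]
      linarith
    calc K ^ ((1:ℝ)/4) ≤ (D^4) ^ ((1:ℝ)/4) :=
          Real.rpow_le_rpow hK0 hKle (by norm_num)
    _ = D := by
        rw [show ((1:ℝ)/4) = ((4:ℕ):ℝ)⁻¹ by norm_num,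
          Real.pow_rpow_inv_natCast hDpos.le (by norm_num)]
  have hnemp : (univ : Finset (Fin n)).Nonempty :=
    Finset.univ_nonempty_iff.mpr (Fin.pos_iff_nonempty.mp (by omega))
  constructor
  · -- inf side
    set m : ℝ := Finset.univ.inf' _ x with hmdef
    have hmle : ∀ i, m ≤ x i := fun i => Finset.inf'_le x (Finset.mem_univ i)
    have hDle : ∀ i, xbar - x i ≤ xbar - m := fun i => by linarith [hmle i]
    have hsum' : ∑ i, (xbar - x i) = 0 := by
      have : ∑ i, (xbar - x i) = -∑ i, (x i - xbar) := by
        rw [← Finset.sum_neg_distrib]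
        apply Finset.sum_congr rfl; intros; ring
      rw [this, hsum, neg_zero]
    have hS2' : 0 < ∑ i, (xbar - x i)^2 := by
      have he : ∑ i, (xbar - x i)^2 = ∑ i, (x i - xbar)^2 := by
        apply Finset.sum_congr rfl; intros; ring
      rw [he]; exact hS2
    obtain ⟨hDpos, hineq⟩ := core n hn (fun i => xbar - x i) hsum' hS2' (xbar - m) hDle
    have he2 : ∑ i, (xbar - x i)^2 = ∑ i, (x i - xbar)^2 := by
      apply Finset.sum_congr rfl; intros; ring
    have he4 : ∑ i, (xbar - x i)^4 = ∑ i, (x i - xbar)^4 := by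
      apply Finset.sum_congr rfl; intros; ring
    rw [he2, he4] at hineq
    have := step (xbar - m) hDpos hineq
    linarith
  · -- sup side
    set M : ℝ := Finset.univ.sup' _ x with hMdef
    have hMge : ∀ i, x i ≤ M := fun i => Finset.le_sup' x (Finset.mem_univ i)
    have hDle : ∀ i, x i - xbar ≤ M - xbar := fun i => by linarith [hMge i]
    have hineq := core n hn (fun i => x i - xbar) hsum hS2 (M - xbar) hDle
    obtain ⟨hDpos, hineq⟩ := hineq
    have := step (M - xbar) hDpos hineq
    rw [ge_iff_le]
    linarith
end

section
/- Let f(x) = x^n + a₂x^{n−2} + a₃x^{n−3} + ... + a_n be a monic real polynomial of degree n ≥ 2 whose roots x_1,...,x_n are all real. Then the span spn(f) = max_i x_i − min_i x_i satisfies spn(f) ≥ (8·((a₂² − 2a₄)/n + 6a₂²/n²))^{1/4}. -/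
open Polynomial

set_option maxHeartbeats 2000000 in
theorem stmt_19 (n : ℕ) (hn : 4 ≤ n) (f : Polynomial ℝ) (x : Fin n → ℝ)
    (hf : f = ∏ i, (X - C (x i)))
    (hcoeff : f.coeff (n - 1) = 0)
    (a2 a4 : ℝ) (ha2 : a2 = f.coeff (n - 2)) (ha4 : a4 = f.coeff (n - 4)) :
    Finset.univ.sup' (Finset.univ_nonempty_iff.mpr (Fin.pos_iff_nonempty.mp (by omega))) x
      - Finset.univ.inf' (Finset.univ_nonempty_iff.mpr (Fin.pos_iff_nonempty.mp (by omega))) x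
    ≥ (8 * ((a2 ^ 2 - 2 * a4) / n + 6 * a2 ^ 2 / (n : ℝ) ^ 2)) ^ ((1 : ℝ) / 4) := by
  classical
  set e : ℕ → ℝ := fun k => ∑ t ∈ Finset.powersetCard k Finset.univ, ∏ i ∈ t, x i with he
  set p : ℕ → ℝ := fun k => ∑ i, x i ^ k with hp
  -- coefficients via Vieta
  have hc : ∀ k ≤ n, f.coeff k = (-1) ^ (n - k) *
      ∑ t ∈ Finset.powersetCard (n - k) Finset.univ, ∏ i ∈ t, x i := by
    intro k hk
    have hcard : Multiset.card (Finset.univ.val.map x) = n := by simp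
    have hprod : f = ((Finset.univ.val.map x).map fun t => X - C t).prod := by
      rw [hf, Finset.prod_eq_multiset_prod, Multiset.map_map]
      rfl
    rw [hprod, Multiset.prod_X_sub_C_coeff _ (by rw [hcard]; exact hk), hcard,
      Finset.esymm_map_val]
  have hc1 := hc (n - 1) (by omega)
  rw [show n - (n - 1) = 1 from by omega, hcoeff] at hc1
  have he1 : e 1 = 0 := by
    have := hc1.symm
    simpa [he] using this
  have hc2 := hc (n - 2) (by omega)
  rw [show n - (n - 2) = 2 from by omega] at hc2
  have ha2e : a2 = e 2 := by rw [ha2, hc2]; simp [he]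
  have hc4 := hc (n - 4) (by omega)
  rw [show n - (n - 4) = 4 from by omega] at hc4
  have ha4e : a4 = e 4 := by rw [ha4, hc4]; norm_num [he]
  -- Newton's identities
  have newton : ∀ k : ℕ, (k : ℝ) * e k = (-1) ^ (k + 1) *
      ∑ a ∈ (Finset.HasAntidiagonal.antidiagonal k).filter (fun a => a.1 < k),
        (-1) ^ a.1 * e a.1 * p a.2 := by
    intro k
    have h := congrArg (MvPolynomial.aeval x) (MvPolynomial.mul_esymm_eq_sum (Fin n) ℝ k)
    simp only [map_mul, map_natCast, map_sum, map_pow, map_neg, map_one,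
      MvPolynomial.aeval_esymm_eq_multiset_esymm, MvPolynomial.psum,
      MvPolynomial.aeval_X, Finset.esymm_map_val] at h
    exact h
  have he0 : e 0 = 1 := by simp [he]
  have hp1 : p 1 = 0 := by
    have : (∑ i, x i ^ 1) = e 1 := by
      simp [he, Finset.powersetCard_one]
    simp only [hp]
    rw [this, he1]
  have hA2 : (Finset.HasAntidiagonal.antidiagonal 2).filter (fun a => a.1 < 2) = {(0,2),(1,1)} := by decide
  have hA4 : (Finset.HasAntidiagonal.antidiagonal 4).filter (fun a => a.1 < 4) =
      {(0,4),(1,3),(2,2),(3,1)} := by decide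
  have h2 := newton 2
  have h4 := newton 4
  rw [hA2] at h2
  rw [hA4] at h4
  rw [Finset.sum_insert (by decide), Finset.sum_singleton] at h2
  rw [Finset.sum_insert (by decide), Finset.sum_insert (by decide),
    Finset.sum_insert (by decide), Finset.sum_singleton] at h4
  rw [he0, he1, hp1] at h2 h4
  norm_num at h2 h4
  have hp2 : p 2 = -2 * e 2 := by linarith
  rw [hp2] at h4
  have hp4 : p 4 = 2 * (e 2) ^ 2 - 4 * e 4 := by linarith [h4]
  -- power sums in terms of a2, a4
  have key1 : a2 ^ 2 - 2 * a4 = p 4 / 2 := by rw [ha2e, ha4e, hp4]; ring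
  have key2 : a2 ^ 2 = (p 2) ^ 2 / 4 := by rw [ha2e]; rw [hp2]; ring
  -- analytic part
  set M := Finset.univ.sup' (Finset.univ_nonempty_iff.mpr (Fin.pos_iff_nonempty.mp (by omega))) x with hM
  set m := Finset.univ.inf' (Finset.univ_nonempty_iff.mpr (Fin.pos_iff_nonempty.mp (by omega))) x with hm
  have hxM : ∀ i, x i ≤ M := fun i => Finset.le_sup' x (Finset.mem_univ i)
  have hmx : ∀ i, m ≤ x i := fun i => Finset.inf'_le x (Finset.mem_univ i)
  have hN : (0 : ℝ) < (n : ℝ) := by positivity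
  have hsum0 : (∑ i, x i) = 0 := by
    have : (∑ i, x i ^ 1) = 0 := hp1
    simpa using this
  have hmle : m ≤ 0 := by
    by_contra h
    push_neg at h
    have : (0 : ℝ) < ∑ i, x i := by
      apply Finset.sum_pos (fun i _ => lt_of_lt_of_le h (hmx i))
      exact Finset.univ_nonempty_iff.mpr (Fin.pos_iff_nonempty.mp (by omega))
    linarith [hsum0]
  have hMge : 0 ≤ M := by
    by_contra h
    push_neg at h
    have : (∑ i, x i) < 0 := by
      apply Finset.sum_neg (fun i _ => lt_of_le_of_lt (hxM i) h)
      exact Finset.univ_nonempty_iff.mpr (Fin.pos_iff_nonempty.mp (by omega))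
    linarith [hsum0]
  set q : ℝ := -(m * M) with hq'
  have hq : 0 ≤ q := by
    have h := mul_nonneg (neg_nonneg.2 hmle) hMge
    rw [hq']
    linarith [h]
  set b : ℝ := (M + m) ^ 2 with hb
  have hb0 : 0 ≤ b := sq_nonneg _
  have hs : 0 ≤ M - m := by
    have i0 : Fin n := ⟨0, by omega⟩
    linarith [hxM i0, hmx i0]
  -- pointwise bounds and summed bounds
  have stepA : ∀ i, x i ^ 2 ≤ (M + m) * x i + q := by
    intro i
    have h := mul_nonneg (sub_nonneg.2 (hmx i)) (sub_nonneg.2 (hxM i))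
    rw [hq']
    linarith [h]
  have hp2b : p 2 ≤ (n : ℝ) * q := by
    have h1 : p 2 ≤ ∑ i, ((M + m) * x i + q) := by
      apply Finset.sum_le_sum
      intro i _
      exact stepA i
    have h2' : (∑ i, ((M + m) * x i + q)) = (M + m) * (∑ i, x i) + (n : ℝ) * q := by
      rw [Finset.sum_add_distrib, ← Finset.mul_sum]
      simp [Finset.card_univ, mul_comm]
    rw [h2', hsum0] at h1
    simpa using h1
  have hp2nn : 0 ≤ p 2 := by
    simp only [hp]
    exact Finset.sum_nonneg fun i _ => sq_nonneg (x i)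
  have hp4nn : 0 ≤ p 4 := by
    simp only [hp]
    exact Finset.sum_nonneg fun i _ => Even.pow_nonneg (by decide) (x i)
  have stepB : ∀ i, x i ^ 4 ≤ b * x i ^ 2 + 2 * (M + m) * q * x i + q ^ 2 := by
    intro i
    have hA := stepA i
    have hsq : x i ^ 2 * x i ^ 2 ≤ ((M + m) * x i + q) * ((M + m) * x i + q) :=
      mul_self_le_mul_self (sq_nonneg _) hA
    calc x i ^ 4 = x i ^ 2 * x i ^ 2 := by ring
      _ ≤ ((M + m) * x i + q) * ((M + m) * x i + q) := hsq
      _ = b * x i ^ 2 + 2 * (M + m) * q * x i + q ^ 2 := by rw [hb]; ring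
  have hp4b : p 4 ≤ b * p 2 + (n : ℝ) * q ^ 2 := by
    have h1 : p 4 ≤ ∑ i, (b * x i ^ 2 + 2 * (M + m) * q * x i + q ^ 2) := by
      apply Finset.sum_le_sum
      intro i _
      exact stepB i
    have h2' : (∑ i, (b * x i ^ 2 + 2 * (M + m) * q * x i + q ^ 2)) =
        b * p 2 + 2 * (M + m) * q * (∑ i, x i) + (n : ℝ) * q ^ 2 := by
      simp only [hp]
      rw [Finset.sum_add_distrib, Finset.sum_add_distrib, ← Finset.mul_sum, ← Finset.mul_sum,
        Finset.sum_const, Finset.card_univ, Fintype.card_fin, nsmul_eq_mul]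
    rw [h2', hsum0] at h1
    simpa using h1
  -- key inequality : inner ≤ (M-m)^4
  have hs2 : (M - m) ^ 2 = b + 4 * q := by rw [hb, hq']; ring
  have c1 : p 4 ≤ b * ((n : ℝ) * q) + (n : ℝ) * q ^ 2 := by
    have := mul_le_mul_of_nonneg_left hp2b hb0
    linarith [hp4b]
  have c2 : (p 2) ^ 2 ≤ ((n : ℝ) * q) ^ 2 := pow_le_pow_left₀ hp2nn hp2b 2
  have expand : 8 * ((a2 ^ 2 - 2 * a4) / (n : ℝ) + 6 * a2 ^ 2 / (n : ℝ) ^ 2) =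
      (4 * p 4 * (n : ℝ) + 12 * (p 2) ^ 2) / (n : ℝ) ^ 2 := by
    rw [key1, key2]
    field_simp
    ring
  have hinnernn : 0 ≤ 8 * ((a2 ^ 2 - 2 * a4) / (n : ℝ) + 6 * a2 ^ 2 / (n : ℝ) ^ 2) := by
    rw [expand]
    apply div_nonneg _ (by positivity)
    linarith [mul_nonneg hp4nn hN.le, sq_nonneg (p 2)]
  have h4pow : (M - m) ^ 4 = (b + 4 * q) ^ 2 := by rw [hb, hq']; ring
  have hfin' : 4 * b * q + 16 * q ^ 2 ≤ (M - m) ^ 4 := by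
    rw [h4pow]
    linarith [sq_nonneg b, mul_nonneg hb0 hq]
  have keyineq : 8 * ((a2 ^ 2 - 2 * a4) / (n : ℝ) + 6 * a2 ^ 2 / (n : ℝ) ^ 2) ≤ (M - m) ^ 4 := by
    rw [expand, div_le_iff₀ (by positivity)]
    have d1 : p 4 * (n : ℝ) ≤ (b * ((n : ℝ) * q) + (n : ℝ) * q ^ 2) * (n : ℝ) :=
      mul_le_mul_of_nonneg_right c1 hN.le
    calc 4 * p 4 * (n : ℝ) + 12 * (p 2) ^ 2
        ≤ 4 * ((b * ((n : ℝ) * q) + (n : ℝ) * q ^ 2) * (n : ℝ)) + 12 * ((n : ℝ) * q) ^ 2 := by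
          linarith [d1, c2]
      _ = (4 * b * q + 16 * q ^ 2) * (n : ℝ) ^ 2 := by ring
      _ ≤ (M - m) ^ 4 * (n : ℝ) ^ 2 := mul_le_mul_of_nonneg_right hfin' (by positivity)
  -- conclude via rpow
  rw [ge_iff_le]
  calc (8 * ((a2 ^ 2 - 2 * a4) / (n : ℝ) + 6 * a2 ^ 2 / (n : ℝ) ^ 2)) ^ ((1 : ℝ) / 4)
      ≤ ((M - m) ^ 4) ^ ((1 : ℝ) / 4) := by
        apply Real.rpow_le_rpow hinnernn keyineq (by norm_num)
    _ = M - m := by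
        rw [← Real.rpow_natCast (M - m) 4, ← Real.rpow_mul hs]
        norm_num
end
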